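/- arXiv:1610.03278 — 3 statements merged into one kernel-verified Lean document; each statement's English description precedes it below -/
import Mathlib

section
/- Let F : ℝ^m → ℝ^m be a C¹ globally integrable vector field with flow Φ, and let V : ℝ^m → ℝ be a strict Lyapunov function for Φ, i.e. V(Φ_t(x)) < V(x) for all x not in the equilibrium set Eq(F) = {x : F(x) = 0} and all t > 0. Let X : ℝ≥0 → ℝ^m be a bounded asymptotic pseudotrajectory of Φ with limit set L. If V(L ∩ Eq(F)) has empty interior in ℝ, then L ⊆ Eq(F) and V is constant on L. -/
open Set Filter Topology MeasureTheory Asymptotics Metric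
open scoped NNReal
set_option linter.unusedSectionVars false

noncomputable section

/-- `φ` is the flow induced by the (globally integrable) vector field `F`. -/
def IsFlowOf {E : Type*} [NormedAddCommGroup E] [NormedSpace ℝ E]
    (F : E → E) (φ : ℝ → E → E) : Prop :=
  (∀ x, φ 0 x = x) ∧ (∀ s t x, φ (s + t) x = φ s (φ t x)) ∧
    (∀ x t, HasDerivAt (fun τ => φ τ x) (F (φ t x)) t)

/-- `X` is an asymptotic pseudotrajectory of the flow `φ`. -/
def IsAPT {E : Type*} [NormedAddCommGroup E] [NormedSpace ℝ E]
    (φ : ℝ → E → E) (X : ℝ → E) : Prop :=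
  ∀ T > (0:ℝ), ∀ ε > (0:ℝ), ∃ t₀ : ℝ, ∀ t ≥ t₀, ∀ h ∈ Icc (0:ℝ) T,
    ‖X (t + h) - φ h (X t)‖ ≤ ε

/-- The limit set of a curve `X`. -/
def limitSet {E : Type*} [NormedAddCommGroup E] (X : ℝ → E) : Set E :=
  ⋂ t : ℝ, closure (X '' Ici t)

variable {E : Type*} [NormedAddCommGroup E] [NormedSpace ℝ E]

lemma aux_lipschitz [FiniteDimensional ℝ E] {F : E → E} (hF : ContDiff ℝ 1 F) (c : E) (R : ℝ) :
    ∃ K : ℝ≥0, LipschitzOnWith K F (closedBall c R) := by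
  obtain ⟨M, hM⟩ := (isCompact_closedBall c R).exists_bound_of_continuousOn
    ((hF.continuous_fderiv one_ne_zero).continuousOn)
  refine ⟨(max M 0).toNNReal, Convex.lipschitzOnWith_of_nnnorm_fderiv_le
    (fun x _ => (hF.differentiable one_ne_zero).differentiableAt) (fun x hx => ?_)
    (convex_closedBall c R)⟩
  rw [← NNReal.coe_le_coe, coe_nnnorm, Real.coe_toNNReal _ (le_max_right _ _)]
  exact le_trans (hM x hx) (le_max_left _ _)

lemma aux_cont_traj {F : E → E} {φ : ℝ → E → E} (hφ : IsFlowOf F φ) (x : E) :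
    Continuous fun t => φ t x :=
  continuous_iff_continuousAt.2 fun t => (hφ.2.2 x t).continuousAt

lemma aux_fixed [FiniteDimensional ℝ E] {F : E → E} {φ : ℝ → E → E}
    (hF : ContDiff ℝ 1 F) (hφ : IsFlowOf F φ) {x : E} (hx : F x = 0) (t : ℝ) :
    φ t x = x := by
  obtain ⟨K, hK⟩ := aux_lipschitz hF x 1
  have h0 : φ 0 x = x := hφ.1 x
  have hloc : ∃ η > (0:ℝ), ∀ u : ℝ, |u| ≤ η → φ u x = x := by
    have hc : ContinuousAt (fun τ => φ τ x) 0 := (aux_cont_traj hφ x).continuousAt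
    obtain ⟨η, hη, hball⟩ := Metric.continuousAt_iff.1 hc 1 one_pos
    have hη2 : (0:ℝ) < η / 2 := by positivity
    have hmem : ∀ w ∈ Ioo (-(η/2)) (η/2), φ w x ∈ closedBall x 1 := by
      intro w hw
      have hd : dist w (0:ℝ) < η := by
        rw [Real.dist_eq, sub_zero, abs_lt]
        constructor <;> [linarith [hw.1]; linarith [hw.2]]
      have := hball hd
      rw [h0] at this
      exact mem_closedBall.2 this.le
    have heq := ODE_solution_unique_of_mem_Icc (v := fun _ y => F y)
      (s := fun _ => closedBall x 1) (K := K) (fun _ _ => hK)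
      (t₀ := 0) (a := -(η/2)) (b := η/2)
      (f := fun τ => φ τ x) (g := fun _ => x)
      ⟨neg_neg_iff_pos.2 hη2, hη2⟩
      (aux_cont_traj hφ x).continuousOn
      (fun u _ => hφ.2.2 x u)
      hmem
      continuousOn_const
      (fun u _ => by simpa [hx] using (hasDerivAt_const u x))
      (fun u _ => mem_closedBall_self zero_le_one)
      h0
    refine ⟨η/4, by positivity, fun u hu => ?_⟩
    rw [abs_le] at hu
    exact heq ⟨by linarith [hu.1], by linarith [hu.2]⟩
  obtain ⟨η, hη, hloc⟩ := hloc
  have hS : IsClopen {t : ℝ | φ t x = x} := by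
    constructor
    · exact isClosed_eq (aux_cont_traj hφ x) continuous_const
    · rw [Metric.isOpen_iff]
      intro s hs
      refine ⟨η, hη, fun u hu => ?_⟩
      have h1 : φ u x = φ (u - s) (φ s x) := by
        rw [← hφ.2.1]; ring_nf
      show φ u x = x
      rw [h1, hs, hloc (u - s) (by rw [← Real.dist_eq]; exact (mem_ball.1 hu).le)]
  have := hS.eq_univ ⟨0, h0⟩
  exact (Set.eq_univ_iff_forall.1 this) t

lemma aux_flow_cont [FiniteDimensional ℝ E] {F : E → E} {φ : ℝ → E → E}
    (hF : ContDiff ℝ 1 F) (hφ : IsFlowOf F φ) (x : E) {T : ℝ} (hT : 0 ≤ T)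
    {ε : ℝ} (hε : 0 < ε) :
    ∃ δ > (0:ℝ), ∀ y, dist y x ≤ δ → ∀ s ∈ Icc 0 T, dist (φ s y) (φ s x) ≤ ε := by
  obtain ⟨R, hR⟩ := (((isCompact_Icc (a := (0:ℝ)) (b := T)).image
    (aux_cont_traj hφ x)).isBounded).subset_closedBall (0 : E)
  have htube : ∀ s ∈ Icc (0:ℝ) T, φ s x ∈ closedBall (0:E) R := fun s hs =>
    hR (mem_image_of_mem _ hs)
  obtain ⟨K, hK⟩ := aux_lipschitz hF (0 : E) (R + 1)
  set c := min 1 ε with hc_def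
  have hc : (0:ℝ) < c := lt_min one_pos hε
  have hKT : (0:ℝ) ≤ (K:ℝ) * T := mul_nonneg K.coe_nonneg hT
  set δ := (c/2) * Real.exp (-((K:ℝ)*T)) with hδ_def
  have hδpos : 0 < δ := by positivity
  have hδc : δ ≤ c/2 := by
    have h1 : Real.exp (-((K:ℝ)*T)) ≤ 1 := Real.exp_le_one_iff.2 (by linarith)
    calc δ ≤ (c/2) * 1 := by
            apply mul_le_mul_of_nonneg_left h1 (by positivity)
      _ = c/2 := mul_one _
  refine ⟨δ, hδpos, fun y hy => ?_⟩
  set D := fun s => dist (φ s y) (φ s x) with hD_def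
  have hD : Continuous D := (aux_cont_traj hφ y).dist (aux_cont_traj hφ x)
  have hD0 : D 0 ≤ c/2 := by
    simp only [hD_def, hφ.1]
    exact hy.trans hδc
  set A := {s : ℝ | s ∈ Icc 0 T ∧ ∀ u ∈ Icc 0 s, D u ≤ c} with hA_def
  have h0A : (0:ℝ) ∈ A := by
    refine ⟨⟨le_rfl, hT⟩, fun u hu => ?_⟩
    have hu0 : u = 0 := le_antisymm hu.2 hu.1
    rw [hu0]; linarith
  have hbdd : BddAbove A := ⟨T, fun a ha => ha.1.2⟩
  set σ := sSup A with hσ_def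
  have hσ0 : 0 ≤ σ := le_csSup hbdd h0A
  have hσT : σ ≤ T := csSup_le ⟨0, h0A⟩ fun a ha => ha.1.2
  have hlt_case : ∀ u, 0 ≤ u → u < σ → D u ≤ c := by
    intro u h1 h2
    obtain ⟨a, haA, hua⟩ := exists_lt_of_lt_csSup ⟨0, h0A⟩ h2
    exact haA.2 u ⟨h1, hua.le⟩
  have key : ∀ u ∈ Icc 0 σ, D u ≤ c := by
    intro u hu
    rcases lt_or_eq_of_le hu.2 with hlt | heq
    · exact hlt_case u hu.1 hlt
    · rcases eq_or_lt_of_le hσ0 with h0σ | h0σ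
      · rw [heq, ← h0σ]; linarith
      · have hcl : closure (Ico 0 σ) ⊆ {w : ℝ | D w ≤ c} :=
          closure_minimal (fun w hw => hlt_case w hw.1 hw.2)
            (isClosed_le hD continuous_const)
        have : σ ∈ closure (Ico 0 σ) := by
          rw [closure_Ico (ne_of_lt h0σ)]
          exact ⟨hσ0, le_rfl⟩
        rw [heq]; exact hcl this
  have hmemC : ∀ u ∈ Ico (0:ℝ) σ, φ u y ∈ closedBall (0:E) (R+1) := by
    intro u hu
    have h1 : D u ≤ c := key u ⟨hu.1, hu.2.le⟩
    have h2 : φ u x ∈ closedBall (0:E) R := htube u ⟨hu.1, hu.2.le.trans hσT⟩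
    rw [mem_closedBall] at h2 ⊢
    calc dist (φ u y) 0 ≤ dist (φ u y) (φ u x) + dist (φ u x) 0 := dist_triangle _ _ _
      _ ≤ c + R := add_le_add h1 h2
      _ ≤ 1 + R := by have := min_le_left 1 ε; rw [hc_def]; linarith [min_le_left 1 ε]
      _ = R + 1 := by ring
  have hG := dist_le_of_trajectories_ODE_of_mem (v := fun _ z => F z)
    (s := fun _ => closedBall (0:E) (R+1)) (K := K) (fun _ _ => hK)
    (f := fun u => φ u y) (g := fun u => φ u x) (a := 0) (b := σ) (δ := δ)
    (aux_cont_traj hφ y).continuousOn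
    (fun u _ => (hφ.2.2 y u).hasDerivWithinAt)
    hmemC
    (aux_cont_traj hφ x).continuousOn
    (fun u _ => (hφ.2.2 x u).hasDerivWithinAt)
    (fun u hu => closedBall_subset_closedBall (by linarith)
      (htube u ⟨hu.1, hu.2.le.trans hσT⟩))
    (by show dist (φ 0 y) (φ 0 x) ≤ δ; rw [hφ.1, hφ.1]; exact hy)
  have hhalf : ∀ u ∈ Icc 0 σ, D u ≤ c/2 := by
    intro u hu
    have h1 := hG u hu
    have h2 : δ * Real.exp ((K:ℝ) * (u - 0)) ≤ δ * Real.exp ((K:ℝ)*T) := by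
      apply mul_le_mul_of_nonneg_left _ hδpos.le
      apply Real.exp_le_exp.2
      apply mul_le_mul_of_nonneg_left _ K.coe_nonneg
      linarith [hu.2, hσT]
    have h3 : δ * Real.exp ((K:ℝ)*T) = c/2 := by
      rw [hδ_def, Real.exp_neg, mul_assoc, inv_mul_cancel₀ (Real.exp_ne_zero _), mul_one]
    exact h1.trans (h2.trans_eq h3)
  have hσeqT : σ = T := by
    by_contra hne
    have hltT : σ < T := lt_of_le_of_ne hσT hne
    have hDσ : D σ < c := lt_of_le_of_lt (hhalf σ ⟨hσ0, le_rfl⟩) (by linarith)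
    obtain ⟨η, hη, hball⟩ := Metric.isOpen_iff.1
      (isOpen_lt hD continuous_const) σ hDσ
    set s' := min T (σ + η/2) with hs'_def
    have hs'A : s' ∈ A := by
      refine ⟨⟨le_min hT (by linarith), min_le_left _ _⟩, fun u hu => ?_⟩
      rcases le_or_gt u σ with hus | hus
      · exact key u ⟨hu.1, hus⟩
      · apply le_of_lt
        apply hball
        rw [mem_ball, Real.dist_eq, abs_lt]
        have := hu.2.trans (min_le_right T (σ + η/2))
        constructor <;> linarith
    have : s' ≤ σ := le_csSup hbdd hs'A
    have hs'gt : σ < s' := lt_min hltT (by linarith)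
    linarith
  intro s hs
  rw [← hσeqT] at hs
  have := hhalf s hs
  have hcε : c ≤ ε := min_le_right 1 ε
  linarith

def limitSet' {E : Type*} [NormedAddCommGroup E] (X : ℝ → E) : Set E :=
  ⋂ t : ℝ, closure (X '' Ici t)

lemma mem_limitSet_iff {X : ℝ → E} {x : E} :
    x ∈ limitSet' X ↔ ∀ t : ℝ, ∀ ε > (0:ℝ), ∃ s ≥ t, dist (X s) x < ε := by
  simp only [limitSet', mem_iInter]
  constructor
  · intro h t ε hε
    have := Metric.mem_closure_iff.1 (h t) ε hε
    obtain ⟨b, ⟨s, hs, rfl⟩, hd⟩ := this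
    exact ⟨s, hs, by rwa [dist_comm]⟩
  · intro h t
    rw [Metric.mem_closure_iff]
    intro ε hε
    obtain ⟨s, hs, hd⟩ := h t ε hε
    exact ⟨X s, mem_image_of_mem _ hs, by rwa [dist_comm]⟩

lemma limitSet_of_seq {X : ℝ → E} {x : E} {u : ℕ → ℝ}
    (hu : Tendsto u atTop atTop) (hX : Tendsto (fun n => X (u n)) atTop (𝓝 x)) :
    x ∈ limitSet' X := by
  rw [mem_limitSet_iff]
  intro t ε hε
  have h1 : ∀ᶠ n in atTop, u n ≥ t := hu.eventually_ge_atTop t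
  have h2 : ∀ᶠ n in atTop, dist (X (u n)) x < ε :=
    hX (Metric.ball_mem_nhds x hε)
  obtain ⟨n, hn1, hn2⟩ := (h1.and h2).exists
  exact ⟨u n, hn1, hn2⟩

lemma limitSet_seq {X : ℝ → E} {x : E} (hx : x ∈ limitSet' X) :
    ∃ u : ℕ → ℝ, Tendsto u atTop atTop ∧ Tendsto (fun n => X (u n)) atTop (𝓝 x) := by
  rw [mem_limitSet_iff] at hx
  have h : ∀ n : ℕ, ∃ s ≥ (n:ℝ), dist (X s) x < 1/(n+1) := fun n =>
    hx n (1/(n+1)) (by positivity)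
  choose u hu1 hu2 using h
  refine ⟨u, tendsto_atTop_mono hu1 tendsto_natCast_atTop_atTop, ?_⟩
  rw [Metric.tendsto_atTop]
  intro ε hε
  obtain ⟨N, hN⟩ := exists_nat_gt (1/ε)
  refine ⟨N, fun n hn => lt_of_lt_of_le (hu2 n) ?_⟩
  rw [div_le_iff₀ (by positivity)]
  rw [div_lt_iff₀ hε] at hN
  have : (N:ℝ) ≤ n := Nat.cast_le.2 hn
  nlinarith [hε]

lemma limitSet_closed (X : ℝ → E) : IsClosed (limitSet' X) :=
  isClosed_iInter fun _ => isClosed_closure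

lemma limitSet_bounded {X : ℝ → E} {C : ℝ} (hC : ∀ t, ‖X t‖ ≤ C) :
    limitSet' X ⊆ closedBall 0 C := by
  intro x hx
  have h1 : x ∈ closure (X '' Ici 0) := mem_iInter.1 hx 0
  have h2 : X '' Ici 0 ⊆ closedBall 0 C := by
    rintro _ ⟨s, _, rfl⟩
    rw [mem_closedBall, dist_zero_right]
    exact hC s
  have := closure_minimal h2 Metric.isClosed_closedBall
  exact this h1

lemma limitSet_approach [ProperSpace E] {X : ℝ → E} {C : ℝ} (hC : ∀ t, ‖X t‖ ≤ C)
    {r : ℝ} (hr : 0 < r) :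
    ∃ t₀ : ℝ, ∀ t ≥ t₀, ∃ z ∈ limitSet' X, dist (X t) z ≤ r := by
  by_contra h
  push_neg at h
  have h' : ∀ n : ℕ, ∃ t ≥ (n:ℝ), ∀ z ∈ limitSet' X, r < dist (X t) z := by
    intro n
    obtain ⟨t, ht, hz⟩ := h n
    exact ⟨t, ht, hz⟩
  choose u hu1 hu2 using h'
  have hub : ∀ n, X (u n) ∈ closedBall (0:E) C := fun n => by
    rw [mem_closedBall, dist_zero_right]; exact hC (u n)
  obtain ⟨a, _, ψ, hψ, ha⟩ := tendsto_subseq_of_bounded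
    (isBounded_closedBall (x := (0:E)) (r := C)) hub
  have haL : a ∈ limitSet' X := by
    apply limitSet_of_seq (u := fun n => u (ψ n)) _ ha
    apply tendsto_atTop_mono (fun n => (hu1 (ψ n)).trans' (Nat.cast_le.2 (hψ.le_apply)))
    exact tendsto_natCast_atTop_atTop
  have hlim : Tendsto (fun n => dist (X (u (ψ n))) a) atTop (𝓝 0) :=
    tendsto_iff_dist_tendsto_zero.1 ha
  have : ∀ n, r < dist (X (u (ψ n))) a := fun n => hu2 (ψ n) a haL
  have := ge_of_tendsto hlim (Eventually.of_forall (fun n => (this n).le))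
  linarith

lemma limitSet_invariant [FiniteDimensional ℝ E] {F : E → E} {φ : ℝ → E → E} {X : ℝ → E}
    (hF : ContDiff ℝ 1 F) (hφ : IsFlowOf F φ)
    (hX : ∀ T > (0:ℝ), ∀ ε > (0:ℝ), ∃ t₀ : ℝ, ∀ t ≥ t₀, ∀ h ∈ Icc (0:ℝ) T,
      ‖X (t + h) - φ h (X t)‖ ≤ ε)
    {x : E} (hx : x ∈ limitSet' X) {h : ℝ} (hh : 0 ≤ h) : φ h x ∈ limitSet' X := by
  rcases eq_or_lt_of_le hh with h0 | hpos
  · rw [← h0, hφ.1]; exact hx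
  obtain ⟨u, huT, hXu⟩ := limitSet_seq hx
  have hkey : Tendsto (fun n => X (u n + h)) atTop (𝓝 (φ h x)) := by
    rw [Metric.tendsto_atTop]
    intro ε hε
    obtain ⟨δ, hδ, hflow⟩ := aux_flow_cont hF hφ x hh (ε := ε/3) (by linarith)
    obtain ⟨t₀, hAPT⟩ := hX h hpos (ε/3) (by linarith)
    have h1 : ∀ᶠ n in atTop, u n ≥ t₀ := huT.eventually_ge_atTop t₀
    have h2 : ∀ᶠ n in atTop, dist (X (u n)) x ≤ δ :=
      hXu (Metric.closedBall_mem_nhds x hδ)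
    obtain ⟨N, hN⟩ := (h1.and h2).exists_forall_of_atTop
    refine ⟨N, fun n hn => ?_⟩
    obtain ⟨hn1, hn2⟩ := hN n hn
    calc dist (X (u n + h)) (φ h x)
        ≤ dist (X (u n + h)) (φ h (X (u n))) + dist (φ h (X (u n))) (φ h x) :=
          dist_triangle _ _ _
      _ ≤ ε/3 + ε/3 := by
          apply add_le_add
          · rw [dist_eq_norm]
            exact hAPT (u n) hn1 h ⟨hh, le_rfl⟩
          · exact hflow (X (u n)) hn2 h ⟨hh, le_rfl⟩
      _ < ε := by linarith
  apply limitSet_of_seq _ hkey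
  exact tendsto_atTop_add_const_right atTop h huT

lemma key_lemma [FiniteDimensional ℝ E] [ProperSpace E]
    {F : E → E} {φ : ℝ → E → E} {V : E → ℝ} {X : ℝ → E}
    (hF : ContDiff ℝ 1 F) (hφ : IsFlowOf F φ) (hVc : Continuous V)
    (hLyap : ∀ x, F x ≠ 0 → ∀ t > (0:ℝ), V (φ t x) < V x)
    (hX : ∀ T > (0:ℝ), ∀ ε > (0:ℝ), ∃ t₀ : ℝ, ∀ t ≥ t₀, ∀ h ∈ Icc (0:ℝ) T,
      ‖X (t + h) - φ h (X t)‖ ≤ ε)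
    (hXc : Continuous X) {C : ℝ} (hC : ∀ t, ‖X t‖ ≤ C)
    {z : E} (hz : z ∈ limitSet' X) :
    ∃ z' ∈ limitSet' X, F z' = 0 ∧ V z' = V z := by
  have hC0 : (0:ℝ) ≤ C := (norm_nonneg (X 0)).trans (hC 0)
  set L := limitSet' X with hL_def
  have hLcl : IsClosed L := limitSet_closed X
  have hLb : L ⊆ closedBall 0 C := limitSet_bounded hC
  have hLcomp : IsCompact L :=
    (isCompact_closedBall (0:E) C).of_isClosed_subset hLcl hLb
  set v := V z with hv_def
  by_contra hcon
  push_neg at hcon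
  -- band around v avoiding V-values of equilibria in L
  have hEqcl : IsClosed {p : E | F p = 0} := isClosed_singleton.preimage hF.continuous
  have hCs : IsCompact (L ∩ {p : E | F p = 0}) := hLcomp.inter_right hEqcl
  have himcl : IsClosed (V '' (L ∩ {p : E | F p = 0})) := (hCs.image hVc).isClosed
  have hvnot : v ∈ (V '' (L ∩ {p : E | F p = 0}))ᶜ := by
    intro ⟨p, ⟨hpL, hpEq⟩, hpv⟩
    exact hcon p hpL hpEq hpv
  obtain ⟨ε', hε', hball'⟩ := Metric.isOpen_iff.1 himcl.isOpen_compl v hvnot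
  set ε := ε'/2 with hε_def
  have hε : (0:ℝ) < ε := by positivity
  have hband : ∀ p ∈ L, F p = 0 → V p ∉ Icc (v-ε) (v+ε) := by
    intro p hpL hFp hmem
    have h1 : V p ∈ Metric.ball v ε' := by
      rw [Metric.mem_ball, Real.dist_eq, abs_lt]
      obtain ⟨hm1, hm2⟩ := hmem
      rw [hε_def] at hm1 hm2
      constructor <;> linarith
    exact (hball' h1) ⟨p, ⟨hpL, hFp⟩, rfl⟩
  -- monotonicity of V along the flow
  have hmono : ∀ p : E, ∀ s : ℝ, 0 ≤ s → V (φ s p) ≤ V p := by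
    intro p s hs
    by_cases hFp : F p = 0
    · rw [aux_fixed hF hφ hFp]
    · rcases eq_or_lt_of_le hs with h0 | hpos
      · rw [← h0, hφ.1]
      · exact (hLyap p hFp s hpos).le
  -- uniform decrease near L in the band
  have hdec : ∃ δ > (0:ℝ), δ ≤ ε/4 ∧ ∀ p : E, (∃ w ∈ L, dist p w ≤ δ) →
      V p ∈ Icc (v-ε) (v+ε) → V (φ 1 p) ≤ V p - δ := by
    have hdec0 : ∃ δ > (0:ℝ), ∀ p : E, (∃ w ∈ L, dist p w ≤ δ) →
        V p ∈ Icc (v-ε) (v+ε) → V (φ 1 p) ≤ V p - δ := by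
      by_contra hneg
      push_neg at hneg
      have h' : ∀ n : ℕ, ∃ p : E, (∃ w ∈ L, dist p w ≤ 1/(n+1)) ∧
          V p ∈ Icc (v-ε) (v+ε) ∧ V p - 1/(n+1) < V (φ 1 p) := by
        intro n
        obtain ⟨p, h1, h2, h3⟩ := hneg (1/(n+1)) (by positivity)
        exact ⟨p, h1, h2, h3⟩
      choose p hp1 hp2 hp3 using h'
      choose w hw1 hw2 using hp1
      have hinv : ∀ n : ℕ, (0:ℝ) < 1/(n+1) := fun n => by positivity
      have hinvle : ∀ n : ℕ, (1:ℝ)/(n+1) ≤ 1 := by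
        intro n
        rw [div_le_one (by positivity)]
        linarith [Nat.cast_nonneg (α := ℝ) n]
      have hpb : ∀ n, p n ∈ closedBall (0:E) (C+1) := by
        intro n
        rw [mem_closedBall, dist_zero_right]
        have h1 : ‖w n‖ ≤ C := by
          have := hLb (hw1 n); rwa [mem_closedBall, dist_zero_right] at this
        calc ‖p n‖ ≤ ‖w n‖ + dist (p n) (w n) := by
              rw [dist_eq_norm]
              calc ‖p n‖ = ‖w n + (p n - w n)‖ := by rw [show w n + (p n - w n) = p n by abel]
                _ ≤ ‖w n‖ + ‖p n - w n‖ := norm_add_le _ _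
          _ ≤ C + 1 := add_le_add h1 ((hw2 n).trans (hinvle n))
      obtain ⟨q, _, ψ, hψ, hq⟩ := tendsto_subseq_of_bounded
        (isBounded_closedBall (x := (0:E)) (r := C+1)) hpb
      have hψn : ∀ n : ℕ, (n:ℝ) ≤ (ψ n : ℝ) := fun n => Nat.cast_le.2 hψ.le_apply
      have hinvψ : Tendsto (fun n : ℕ => 1/((ψ n : ℝ)+1)) atTop (𝓝 0) := by
        apply squeeze_zero (g := fun n : ℕ => 1/((n:ℝ)+1)) (fun n => (hinv (ψ n)).le)
          (fun n => one_div_le_one_div_of_le (by positivity) (by linarith [hψn n]))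
          tendsto_one_div_add_atTop_nhds_zero_nat
      have hwq : Tendsto (fun n => w (ψ n)) atTop (𝓝 q) := by
        rw [tendsto_iff_dist_tendsto_zero]
        have hb : ∀ n : ℕ, dist (w (ψ n)) q ≤ dist (p (ψ n)) q + 1/((ψ n:ℝ)+1) := by
          intro n
          calc dist (w (ψ n)) q ≤ dist (w (ψ n)) (p (ψ n)) + dist (p (ψ n)) q :=
                dist_triangle _ _ _
            _ ≤ dist (p (ψ n)) q + 1/((ψ n:ℝ)+1) := by
                rw [dist_comm (w (ψ n))]
                linarith [hw2 (ψ n)]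
        have ht : Tendsto (fun n : ℕ => dist (p (ψ n)) q + 1/((ψ n:ℝ)+1)) atTop (𝓝 0) := by
          have h1 := (tendsto_iff_dist_tendsto_zero.1 hq).add hinvψ
          simpa using h1
        exact squeeze_zero (fun n => dist_nonneg) hb ht
      have hqL : q ∈ L := hLcl.mem_of_tendsto hwq (Eventually.of_forall (fun n => hw1 (ψ n)))
      have hpq : Tendsto (fun n => p (ψ n)) atTop (𝓝 q) := hq
      have hVq : V q ∈ Icc (v-ε) (v+ε) := by
        apply isClosed_Icc.mem_of_tendsto ((hVc.tendsto q).comp hpq)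
        exact Eventually.of_forall (fun n => hp2 (ψ n))
      have hFq : F q ≠ 0 := fun hFq0 => hband q hqL hFq0 hVq
      have hlt : V (φ 1 q) < V q := hLyap q hFq 1 one_pos
      have hφq : Tendsto (fun n => φ 1 (p (ψ n))) atTop (𝓝 (φ 1 q)) := by
        rw [Metric.tendsto_atTop]
        intro ε0 hε0
        obtain ⟨δ1, hδ1, hflow⟩ := aux_flow_cont hF hφ q zero_le_one (ε := ε0/2)
          (by linarith)
        have hev : ∀ᶠ n in atTop, p (ψ n) ∈ closedBall q δ1 :=
          hpq (Metric.closedBall_mem_nhds q hδ1)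
        obtain ⟨N, hN⟩ := hev.exists_forall_of_atTop
        refine ⟨N, fun n hn => ?_⟩
        have h2 := hflow (p (ψ n)) (hN n hn) 1 ⟨zero_le_one, le_rfl⟩
        linarith
      have hle : V q ≤ V (φ 1 q) := by
        apply le_of_tendsto_of_tendsto'
          (f := fun n => V (p (ψ n)) - 1/((ψ n:ℝ)+1))
          (g := fun n => V (φ 1 (p (ψ n))))
          (by simpa using (((hVc.tendsto q).comp hpq).sub hinvψ))
          ((hVc.tendsto (φ 1 q)).comp hφq)
          (fun n => (hp3 (ψ n)).le)
      linarith
    obtain ⟨δ0, hδ0, hprop⟩ := hdec0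
    refine ⟨min δ0 (ε/4), lt_min hδ0 (by positivity), min_le_right _ _, ?_⟩
    intro pp hnear hmem
    obtain ⟨w, hwL, hww⟩ := hnear
    have := hprop pp ⟨w, hwL, hww.trans (min_le_left _ _)⟩ hmem
    linarith [min_le_left δ0 (ε/4)]
  obtain ⟨δ, hδ, hδε, hdec⟩ := hdec
  -- uniform continuity of V on a big ball
  have hUC := (isCompact_closedBall (0:E) (C+2)).uniformContinuousOn_of_continuous
    hVc.continuousOn
  rw [Metric.uniformContinuousOn_iff_le] at hUC
  obtain ⟨ρ0, hρ0, hρ'⟩ := hUC (δ/4) (by positivity)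
  set ρ := min ρ0 1 with hρ_def
  have hρpos : 0 < ρ := lt_min hρ0 one_pos
  have hρ1 : ρ ≤ 1 := min_le_right _ _
  have hρ : ∀ a ∈ closedBall (0:E) (C+2), ∀ b ∈ closedBall (0:E) (C+2),
      dist a b ≤ ρ → dist (V a) (V b) ≤ δ/4 := fun a ha b hb hd =>
    hρ' a ha b hb (hd.trans (min_le_left _ _))
  obtain ⟨t₁, hAPT⟩ := hX 1 one_pos ρ hρpos
  obtain ⟨t₂, happ⟩ := limitSet_approach hC hδ
  -- step lemmas
  have hS1 : ∀ t, t₁ ≤ t → ∀ h ∈ Icc (0:ℝ) 1, V (X (t+h)) ≤ V (X t) + δ/4 := by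
    intro t ht h hh
    have hd : ‖X (t+h) - φ h (X t)‖ ≤ ρ := hAPT t ht h hh
    have hb1 : X (t+h) ∈ closedBall (0:E) (C+2) := by
      rw [mem_closedBall, dist_zero_right]; linarith [hC (t+h)]
    have hb2 : φ h (X t) ∈ closedBall (0:E) (C+2) := by
      rw [mem_closedBall, dist_zero_right]
      calc ‖φ h (X t)‖ = ‖X (t+h) - (X (t+h) - φ h (X t))‖ := by
            rw [show X (t+h) - (X (t+h) - φ h (X t)) = φ h (X t) by abel]
        _ ≤ ‖X (t+h)‖ + ‖X (t+h) - φ h (X t)‖ := norm_sub_le _ _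
        _ ≤ C + 2 := by linarith [hC (t+h), hρ1]
    have h1 : dist (V (X (t+h))) (V (φ h (X t))) ≤ δ/4 :=
      hρ _ hb1 _ hb2 (by rw [dist_eq_norm]; exact hd)
    have h2 : V (φ h (X t)) ≤ V (X t) := hmono _ h hh.1
    rw [Real.dist_eq, abs_le] at h1
    linarith [h1.2]
  have hS2 : ∀ t, t₁ ≤ t → t₂ ≤ t → V (X t) ∈ Icc (v-ε) (v+ε) →
      V (X (t+1)) ≤ V (X t) - (3/4)*δ := by
    intro t ht1 ht2 hmem
    have hnear := happ t ht2
    have hdecr := hdec (X t) hnear hmem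
    have hd : ‖X (t+1) - φ 1 (X t)‖ ≤ ρ := hAPT t ht1 1 ⟨zero_le_one, le_rfl⟩
    have hb1 : X (t+1) ∈ closedBall (0:E) (C+2) := by
      rw [mem_closedBall, dist_zero_right]; linarith [hC (t+1)]
    have hb2 : φ 1 (X t) ∈ closedBall (0:E) (C+2) := by
      rw [mem_closedBall, dist_zero_right]
      calc ‖φ 1 (X t)‖ = ‖X (t+1) - (X (t+1) - φ 1 (X t))‖ := by
            rw [show X (t+1) - (X (t+1) - φ 1 (X t)) = φ 1 (X t) by abel]
        _ ≤ ‖X (t+1)‖ + ‖X (t+1) - φ 1 (X t)‖ := norm_sub_le _ _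
        _ ≤ C + 2 := by linarith [hC (t+1), hρ1]
    have h1 : dist (V (X (t+1))) (V (φ 1 (X t))) ≤ δ/4 :=
      hρ _ hb1 _ hb2 (by rw [dist_eq_norm]; exact hd)
    rw [Real.dist_eq, abs_le] at h1
    linarith [h1.2]
  -- sequence approaching v
  obtain ⟨u, huT, hXu⟩ := limitSet_seq hz
  have hVu : Tendsto (fun n => V (X (u n))) atTop (𝓝 v) := (hVc.tendsto z).comp hXu
  have hev : ∀ᶠ n in atTop, u n ≥ max t₁ t₂ ∧ V (X (u n)) ∈ closedBall v (δ/4) :=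
    (huT.eventually_ge_atTop (max t₁ t₂)).and
      (hVu (Metric.closedBall_mem_nhds v (by positivity)))
  obtain ⟨N, hN1, hN2⟩ := hev.exists
  set t0 := u N with ht0_def
  have ht0₁ : t₁ ≤ t0 := (le_max_left _ _).trans hN1
  have ht0₂ : t₂ ≤ t0 := (le_max_right _ _).trans hN1
  rw [mem_closedBall, Real.dist_eq, abs_le] at hN2
  -- S3: reach below v - ε/2
  have hS3 : ∃ k : ℕ, V (X (t0 + k)) ≤ v - ε/2 := by
    by_contra hcon3
    push_neg at hcon3
    have hstep : ∀ k : ℕ, V (X (t0 + k)) ≤ V (X t0) - k * ((3/4)*δ) := by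
      intro k
      induction k with
      | zero => simp
      | succ k ih =>
        have hkd : (0:ℝ) ≤ k * ((3/4)*δ) := by positivity
        have hbandk : V (X (t0 + k)) ∈ Icc (v-ε) (v+ε) := by
          constructor
          · linarith [hcon3 k]
          · linarith [hN2.2]
        have h2 := hS2 (t0 + k) (by linarith [Nat.cast_nonneg (α := ℝ) k])
          (by linarith [Nat.cast_nonneg (α := ℝ) k]) hbandk
        have hcast : t0 + ((k:ℝ)+1) = (t0 + k) + 1 := by ring
        push_cast
        rw [hcast]
        push_cast at ih
        linarith
    obtain ⟨k, hk⟩ := exists_nat_gt ((V (X t0) - (v - ε/2)) / ((3/4)*δ))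
    rw [div_lt_iff₀ (by positivity)] at hk
    have h1 := hstep k
    have h2 := hcon3 k
    linarith
  obtain ⟨k0, hk0⟩ := hS3
  set t₃ := t0 + (k0:ℝ) with ht₃_def
  have ht₃₁ : t₁ ≤ t₃ := by
    have : (0:ℝ) ≤ (k0:ℝ) := Nat.cast_nonneg _
    linarith
  have ht₃₂ : t₂ ≤ t₃ := by
    have : (0:ℝ) ≤ (k0:ℝ) := Nat.cast_nonneg _
    linarith
  -- S4: stay below v - ε/4 forever
  have hS4 : ∀ s ≥ t₃, V (X s) < v - ε/4 := by
    intro s hs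
    by_contra hge
    push_neg at hge
    have hsne : t₃ < s := by
      rcases eq_or_lt_of_le hs with h0 | h0
      · rw [← h0] at hge; linarith
      · exact h0
    set G := Icc t₃ s ∩ {u : ℝ | v - ε/4 ≤ V (X u)} with hG_def
    have hGne : G.Nonempty := ⟨s, ⟨hsne.le, le_rfl⟩, hge⟩
    have hGcl : IsClosed G := isClosed_Icc.inter (isClosed_le continuous_const
      (hVc.comp hXc))
    have hGbdd : BddBelow G := ⟨t₃, fun a ha => ha.1.1⟩
    set u₁ := sInf G with hu₁_def
    have hu₁G := hGcl.csInf_mem hGne hGbdd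
    obtain ⟨hu₁I, hVu₁⟩ := hu₁G
    have hu₁gt : t₃ < u₁ := by
      rcases eq_or_lt_of_le hu₁I.1 with h0 | h0
      · rw [← h0] at hVu₁; simp only [mem_setOf_eq] at hVu₁; linarith
      · exact h0
    set H := Icc t₃ u₁ ∩ {u : ℝ | V (X u) ≤ v - ε/2} with hH_def
    have hHne : H.Nonempty := ⟨t₃, ⟨le_rfl, hu₁gt.le⟩, hk0⟩
    have hHcl : IsClosed H := isClosed_Icc.inter (isClosed_le (hVc.comp hXc)
      continuous_const)
    have hHbdd : BddAbove H := ⟨u₁, fun a ha => ha.1.2⟩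
    set u₀ := sSup H with hu₀_def
    have hu₀H := hHcl.csSup_mem hHne hHbdd
    obtain ⟨hu₀I, hVu₀⟩ := hu₀H
    simp only [mem_setOf_eq] at hVu₀ hVu₁
    have hu₀lt : u₀ < u₁ := by
      rcases eq_or_lt_of_le hu₀I.2 with h0 | h0
      · rw [h0] at hVu₀; linarith
      · exact h0
    have hmax : ∀ w ∈ Ioc u₀ u₁, v - ε/2 < V (X w) := by
      intro w hw
      by_contra hle
      push_neg at hle
      have : w ∈ H := ⟨⟨hu₀I.1.trans hw.1.le, hw.2⟩, hle⟩
      have := le_csSup hHbdd this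
      linarith [hw.1]
    have hVu₀ge : v - ε/2 ≤ V (X u₀) := by
      have hsub : Ioc u₀ u₁ ⊆ {w : ℝ | v - ε/2 ≤ V (X w)} :=
        fun w hw => (hmax w hw).le
      have hclm : closure (Ioc u₀ u₁) ⊆ {w : ℝ | v - ε/2 ≤ V (X w)} :=
        closure_minimal hsub (isClosed_le continuous_const (hVc.comp hXc))
      have : u₀ ∈ closure (Ioc u₀ u₁) := by
        rw [closure_Ioc (ne_of_lt hu₀lt)]
        exact ⟨le_rfl, hu₀lt.le⟩
      exact hclm this
    have hu₀band : V (X u₀) ∈ Icc (v-ε) (v+ε) := ⟨by linarith, by linarith⟩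
    have hu₀t₁ : t₁ ≤ u₀ := ht₃₁.trans hu₀I.1
    have hu₀t₂ : t₂ ≤ u₀ := ht₃₂.trans hu₀I.1
    rcases le_or_gt u₁ (u₀ + 1) with hcase | hcase
    · have h1 := hS1 u₀ hu₀t₁ (u₁ - u₀) ⟨by linarith, by linarith⟩
      rw [show u₀ + (u₁ - u₀) = u₁ by ring] at h1
      linarith
    · have h2 := hS2 u₀ hu₀t₁ hu₀t₂ hu₀band
      have h3 := hmax (u₀+1) ⟨by linarith, by linarith⟩
      linarith
  -- final contradiction
  have hevf : ∀ᶠ n in atTop, V (X (u n)) ≤ v - ε/4 :=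
    (huT.eventually_ge_atTop t₃).mono (fun n hn => (hS4 (u n) hn).le)
  have := le_of_tendsto hVu hevf
  linarith

/-- if `V(L ∩ Eq(F))` has empty interior then the limit set of a
bounded APT is contained in the equilibrium set and `V` is constant on it. -/
theorem limitSet_subset_eq_of_interior_empty {m : ℕ}
    (F : EuclideanSpace ℝ (Fin m) → EuclideanSpace ℝ (Fin m))
    (φ : ℝ → EuclideanSpace ℝ (Fin m) → EuclideanSpace ℝ (Fin m))
    (V : EuclideanSpace ℝ (Fin m) → ℝ) (X : ℝ → EuclideanSpace ℝ (Fin m))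
    (hF : ContDiff ℝ 1 F) (hφ : IsFlowOf F φ)
    (hVc : Continuous V)
    (hLyap : ∀ x, F x ≠ 0 → ∀ t > (0:ℝ), V (φ t x) < V x)
    (hX : IsAPT φ X) (hXc : Continuous X) (hXb : ∃ C : ℝ, ∀ t, ‖X t‖ ≤ C)
    (hint : interior (V '' (limitSet X ∩ {x | F x = 0})) = ∅) :
    limitSet X ⊆ {x | F x = 0} ∧
      ∀ x ∈ limitSet X, ∀ y ∈ limitSet X, V x = V y := by
  obtain ⟨C, hC⟩ := hXb
  have hLL : limitSet X = limitSet' X := rfl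
  have hX' : ∀ T > (0:ℝ), ∀ ε > (0:ℝ), ∃ t₀ : ℝ, ∀ t ≥ t₀, ∀ h ∈ Icc (0:ℝ) T,
      ‖X (t + h) - φ h (X t)‖ ≤ ε := hX
  have hmain : ∀ a ∈ limitSet' X, ∀ b ∈ limitSet' X, V a < V b → False := by
    intro a ha b hb hab
    have hsub : Ioo (V a) (V b) ⊆ V '' (limitSet X ∩ {p | F p = 0}) := by
      intro r hr
      obtain ⟨ua, huaT, hXa⟩ := limitSet_seq ha
      obtain ⟨ub, hubT, hXb'⟩ := limitSet_seq hb
      have hVa : Tendsto (fun n => V (X (ua n))) atTop (𝓝 (V a)) :=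
        (hVc.tendsto a).comp hXa
      have hVb : Tendsto (fun n => V (X (ub n))) atTop (𝓝 (V b)) :=
        (hVc.tendsto b).comp hXb'
      have hτ : ∀ n : ℕ, ∃ τ ≥ (n:ℝ), V (X τ) = r := by
        intro n
        have hev1 : ∀ᶠ k in atTop, ua k ≥ (n:ℝ) ∧ V (X (ua k)) < r :=
          (huaT.eventually_ge_atTop (n:ℝ)).and (hVa (Iio_mem_nhds hr.1))
        obtain ⟨k₁, hk₁1, hk₁2⟩ := hev1.exists
        have hev2 : ∀ᶠ k in atTop, ub k ≥ ua k₁ ∧ r < V (X (ub k)) :=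
          (hubT.eventually_ge_atTop (ua k₁)).and (hVb (Ioi_mem_nhds hr.2))
        obtain ⟨k₂, hk₂1, hk₂2⟩ := hev2.exists
        have hIVT := intermediate_value_Icc hk₂1
          ((hVc.comp hXc).continuousOn (s := Icc (ua k₁) (ub k₂)))
        have hrmem : r ∈ Icc (V (X (ua k₁))) (V (X (ub k₂))) := ⟨hk₁2.le, hk₂2.le⟩
        obtain ⟨τ, hτI, hτV⟩ := hIVT hrmem
        exact ⟨τ, hk₁1.trans hτI.1, hτV⟩
      choose τ hτ1 hτ2 using hτ
      have hτb : ∀ n, X (τ n) ∈ closedBall (0:EuclideanSpace ℝ (Fin m)) C := by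
        intro n
        rw [mem_closedBall, dist_zero_right]
        exact hC (τ n)
      obtain ⟨zz, _, ψ, hψ, hzz⟩ := tendsto_subseq_of_bounded
        (isBounded_closedBall (x := (0:EuclideanSpace ℝ (Fin m))) (r := C)) hτb
      have hzzL : zz ∈ limitSet' X := by
        apply limitSet_of_seq (u := fun n => τ (ψ n)) _ hzz
        apply tendsto_atTop_mono
          (fun n => (hτ1 (ψ n)).trans' (Nat.cast_le.2 hψ.le_apply))
        exact tendsto_natCast_atTop_atTop
      have hVzz : V zz = r := by
        have h1 : Tendsto (fun n => V (X (τ (ψ n)))) atTop (𝓝 (V zz)) :=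
          (hVc.tendsto zz).comp hzz
        have h2 : (fun n => V (X (τ (ψ n)))) = fun _ => r := by
          funext n; exact hτ2 (ψ n)
        rw [h2] at h1
        exact tendsto_nhds_unique h1 tendsto_const_nhds
      obtain ⟨z', hz'L, hz'F, hz'V⟩ := key_lemma hF hφ hVc hLyap hX' hXc hC hzzL
      exact ⟨z', ⟨hz'L, hz'F⟩, by rw [hz'V, hVzz]⟩
    have h1 : Ioo (V a) (V b) ⊆ interior (V '' (limitSet X ∩ {p | F p = 0})) :=
      isOpen_Ioo.subset_interior_iff.2 hsub
    rw [hint] at h1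
    obtain ⟨r, hr⟩ := nonempty_Ioo.2 hab
    exact h1 hr
  have hconst : ∀ x ∈ limitSet X, ∀ y ∈ limitSet X, V x = V y := by
    intro x hx y hy
    by_contra hne
    rcases lt_or_gt_of_ne hne with h | h
    · exact hmain x hx y hy h
    · exact hmain y hy x hx h
  refine ⟨?_, hconst⟩
  intro x hx
  by_contra hFx
  have h1 : φ 1 x ∈ limitSet X := limitSet_invariant hF hφ hX' hx zero_le_one
  have h2 := hLyap x hFx 1 one_pos
  have h3 := hconst x hx (φ 1 x) h1
  linarith
end
end

section
/- Let F, V, Φ be as in a gradient-like system (V a C¹ strict Lyapunov function for the C¹ vector field F), and let X be a bounded asymptotic pseudotrajectory of Φ whose limit set L(X) ∩ Eq(F) is countable and such that V(L(X) ∩ Eq(F)) has empty interior. Then X(t) converges as t → ∞ to a single equilibrium point of F. -/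
open Set Filter Topology MeasureTheory Asymptotics

noncomputable section

variable {m : ℕ}

local notation "E" => EuclideanSpace ℝ (Fin m)

lemma lipsOnBall (F : E → E) (hF : ContDiff ℝ 1 F) (R : ℝ) :
    ∃ K : NNReal, LipschitzOnWith K F (Metric.closedBall (0:E) R) := by
  obtain ⟨B, hB⟩ := (isCompact_closedBall (0:E) R).exists_bound_of_continuousOn
      ((hF.continuous_fderiv one_ne_zero).continuousOn)
  refine ⟨⟨max B 0, le_max_right _ _⟩, Convex.lipschitzOnWith_of_nnnorm_fderiv_le
    (fun x _ => hF.differentiable one_ne_zero x) (fun x hx => ?_) (convex_closedBall _ _)⟩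
  have : ‖fderiv ℝ F x‖ ≤ max B 0 := le_trans (hB x hx) (le_max_left _ _)
  exact this

lemma flow_cont_t (F : E → E) (φ : ℝ → E → E) (hφ : IsFlowOf F φ) (z : E) :
    Continuous (fun t => φ t z) :=
  continuous_iff_continuousAt.2 fun t => (hφ.2.2 z t).continuousAt

/-- equilibria are fixed points of the flow (for `t ≥ 0`). -/
lemma eq_fixed (F : E → E) (φ : ℝ → E → E) (hF : ContDiff ℝ 1 F)
    (hφ : IsFlowOf F φ) {x : E} (hx : F x = 0) {t : ℝ} (ht : 0 ≤ t) :
    φ t x = x := by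
  -- choose big ball containing the orbit on `[0, t]` and `x`
  have hco : Continuous (fun τ => φ τ x) := flow_cont_t F φ hφ x
  obtain ⟨R₀, hR₀⟩ := ((isCompact_Icc.image hco).isBounded.subset_closedBall (0:E))
  set R : ℝ := max R₀ ‖x‖ with hR
  obtain ⟨K, hK⟩ := lipsOnBall F hF R
  have key := dist_le_of_trajectories_ODE_of_mem (v := fun _ => F)
      (s := fun _ => Metric.closedBall (0:E) R) (K := K) (f := fun τ => φ τ x)
      (g := fun _ => x) (a := 0) (b := t) (δ := 0)
      (fun _ _ => hK) (hco.continuousOn)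
      (fun τ _ => (hφ.2.2 x τ).hasDerivWithinAt)
      (fun τ hτ => by
        have : φ τ x ∈ (fun τ => φ τ x) '' Icc 0 t := mem_image_of_mem _ ⟨hτ.1, le_of_lt hτ.2⟩
        exact Metric.closedBall_subset_closedBall (le_max_left _ _) (hR₀ this))
      (continuousOn_const)
      (fun τ _ => by simpa [hx] using (hasDerivWithinAt_const τ (Ici τ) x))
      (fun τ _ => by simpa [hR] using Or.inr (le_max_right R₀ ‖x‖))
      (by simp [hφ.1 x])
  have := key t ⟨ht, le_rfl⟩
  have h0 : dist (φ t x) x ≤ 0 := by simpa using this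
  have := dist_nonneg (x := φ t x) (y := x)
  have : dist (φ t x) x = 0 := le_antisymm h0 this
  exact dist_eq_zero.mp this

/-- local continuity of the flow in the space variable, uniformly for `h ∈ [0,1]`. -/
lemma flow_cont_x (F : E → E) (φ : ℝ → E → E) (hF : ContDiff ℝ 1 F)
    (hφ : IsFlowOf F φ) (x : E) {η : ℝ} (hη : 0 < η) :
    ∃ ε > 0, ∀ y, dist y x ≤ ε → ∀ h ∈ Icc (0:ℝ) 1, dist (φ h y) (φ h x) ≤ η := by
  have hco : Continuous (fun τ => φ τ x) := flow_cont_t F φ hφ x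
  obtain ⟨R₀, hR₀⟩ := ((isCompact_Icc.image hco).isBounded.subset_closedBall (0:E))
  have hR₀0 : 0 ≤ R₀ := by
    have := hR₀ (mem_image_of_mem _ (by norm_num : (0:ℝ) ∈ Icc (0:ℝ) 1))
    exact le_trans (norm_nonneg _) (by simpa [Metric.mem_closedBall, dist_eq_norm] using this)
  obtain ⟨K, hK⟩ := lipsOnBall F hF (R₀ + 2)
  set r : ℝ := min η 1 with hr
  have hr0 : 0 < r := lt_min hη one_pos
  set ε : ℝ := (r / 2) * Real.exp (-(K:ℝ)) with hε
  have hε0 : 0 < ε := by positivity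
  refine ⟨ε, hε0, fun y hy => ?_⟩
  set g : ℝ → ℝ := fun h => dist (φ h y) (φ h x) with hg
  have hgc : Continuous g := ((flow_cont_t F φ hφ y).dist hco)
  -- Gronwall on any interval `[0, b] ⊆ [0,1]` on which `g < r` on `Ico 0 b`
  have gron : ∀ b ∈ Icc (0:ℝ) 1, (∀ h ∈ Ico (0:ℝ) b, g h ≤ r) →
      ∀ h ∈ Icc (0:ℝ) b, g h ≤ ε * Real.exp ((K:ℝ) * h) := by
    intro b hb hsmall
    have memx : ∀ h ∈ Ico (0:ℝ) b, φ h x ∈ Metric.closedBall (0:E) (R₀ + 2) := by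
      intro h hh
      have : φ h x ∈ (fun τ => φ τ x) '' Icc 0 1 :=
        mem_image_of_mem _ ⟨hh.1, le_trans (le_of_lt hh.2) hb.2⟩
      exact Metric.closedBall_subset_closedBall (by linarith) (hR₀ this)
    have memy : ∀ h ∈ Ico (0:ℝ) b, φ h y ∈ Metric.closedBall (0:E) (R₀ + 2) := by
      intro h hh
      have h1 : dist (φ h y) (φ h x) ≤ r := hsmall h hh
      have h2 : ‖φ h x‖ ≤ R₀ := by
        have : φ h x ∈ (fun τ => φ τ x) '' Icc 0 1 :=
          mem_image_of_mem _ ⟨hh.1, le_trans (le_of_lt hh.2) hb.2⟩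
        simpa [Metric.mem_closedBall, dist_eq_norm] using hR₀ this
      have hr1 : r ≤ 1 := min_le_right _ _
      have : ‖φ h y‖ ≤ R₀ + 1 := by
        have htri : dist (φ h y) (0:E) ≤ dist (φ h y) (φ h x) + dist (φ h x) (0:E) :=
          dist_triangle _ _ _
        rw [dist_eq_norm, sub_zero] at htri
        have h2' : dist (φ h x) (0:E) ≤ R₀ := by rw [dist_eq_norm, sub_zero]; exact h2
        linarith
      simpa [Metric.mem_closedBall, dist_eq_norm] using le_trans this (by linarith)
    have key := dist_le_of_trajectories_ODE_of_mem (v := fun _ => F)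
        (s := fun _ => Metric.closedBall (0:E) (R₀ + 2)) (K := K)
        (f := fun τ => φ τ y) (g := fun τ => φ τ x) (a := 0) (b := b) (δ := ε)
        (fun _ _ => hK) ((flow_cont_t F φ hφ y).continuousOn)
        (fun τ _ => (hφ.2.2 y τ).hasDerivWithinAt) memy
        (hco.continuousOn) (fun τ _ => (hφ.2.2 x τ).hasDerivWithinAt) memx
        (by simpa [hφ.1] using hy)
    intro h hh
    have := key h ⟨hh.1, hh.2⟩
    simpa using this
  -- bound `ε * exp (K h) ≤ r / 2` for `h ∈ [0,1]`
  have hexp : ∀ h ∈ Icc (0:ℝ) 1, ε * Real.exp ((K:ℝ) * h) ≤ r / 2 := by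
    intro h hh
    rw [hε, mul_assoc, ← Real.exp_add]
    have : (-(K:ℝ)) + (K:ℝ) * h ≤ 0 := by
      have := mul_le_mul_of_nonneg_left hh.2 K.coe_nonneg
      linarith
    have := Real.exp_le_one_iff.2 this
    nlinarith [hr0]
  -- the set where `g` reaches `r`
  by_cases hT : ∃ h ∈ Icc (0:ℝ) 1, r ≤ g h
  · exfalso
    set T : Set ℝ := {h ∈ Icc (0:ℝ) 1 | r ≤ g h} with hTdef
    have hTne : T.Nonempty := hT
    have hTclosed : IsClosed T :=
      (isClosed_Icc.inter (isClosed_le continuous_const hgc) : IsClosed (Icc (0:ℝ) 1 ∩ {h | r ≤ g h}))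
    have hTbdd : BddBelow T := ⟨0, fun h hh => hh.1.1⟩
    set τ := sInf T with hτ
    have hτT : τ ∈ T := hTclosed.csInf_mem hTne hTbdd
    have hτmem : τ ∈ Icc (0:ℝ) 1 := hτT.1
    have hsmall : ∀ h ∈ Ico (0:ℝ) τ, g h ≤ r := by
      intro h hh
      by_contra hcon
      push_neg at hcon
      have : τ ≤ h := csInf_le hTbdd ⟨⟨hh.1, le_trans (le_of_lt hh.2) hτmem.2⟩, le_of_lt hcon⟩
      exact absurd hh.2 (not_lt.2 this)
    have := le_trans (gron τ hτmem hsmall τ ⟨hτmem.1, le_rfl⟩) (hexp τ hτmem)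
    have : g τ < r := lt_of_le_of_lt this (by linarith)
    exact absurd hτT.2 (not_le.2 this)
  · push_neg at hT
    intro h hh
    have hsmall : ∀ h' ∈ Ico (0:ℝ) 1, g h' ≤ r :=
      fun h' hh' => le_of_lt (hT h' ⟨hh'.1, le_of_lt hh'.2⟩)
    have := le_trans (gron 1 ⟨zero_le_one, le_rfl⟩ hsmall h hh) (hexp h hh)
    calc dist (φ h y) (φ h x) ≤ r / 2 := this
    _ ≤ η := by
        have : r ≤ η := min_le_left _ _
        linarith

lemma mem_limitSet_of_seq {X : ℝ → E} {p : E} (s : ℕ → ℝ)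
    (hs : Tendsto s atTop atTop) (hXs : Tendsto (fun n => X (s n)) atTop (𝓝 p)) :
    p ∈ limitSet X := by
  refine mem_iInter.2 fun t => mem_closure_of_tendsto hXs ?_
  filter_upwards [hs.eventually_ge_atTop t] with n hn
  exact mem_image_of_mem _ hn

lemma exists_seq_of_mem_limitSet {X : ℝ → E} {p : E} (hp : p ∈ limitSet X) :
    ∃ s : ℕ → ℝ, Tendsto s atTop atTop ∧ Tendsto (fun n => X (s n)) atTop (𝓝 p) := by
  have h : ∀ n : ℕ, ∃ r : ℝ, r ≥ n ∧ dist p (X r) < 1 / (n + 1) := by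
    intro n
    have hmem : p ∈ closure (X '' Ici (n:ℝ)) := mem_iInter.1 hp n
    rw [Metric.mem_closure_iff] at hmem
    obtain ⟨q, hq, hdq⟩ := hmem (1 / (n + 1)) (by positivity)
    obtain ⟨r, hr, rfl⟩ := hq
    exact ⟨r, hr, hdq⟩
  choose s hs1 hs2 using h
  refine ⟨s, tendsto_atTop_mono hs1 tendsto_natCast_atTop_atTop, ?_⟩
  rw [tendsto_iff_dist_tendsto_zero]
  refine squeeze_zero (fun n => dist_nonneg) (fun n => (dist_comm (X (s n)) p ▸ (hs2 n).le))
    ?_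
  simpa using (tendsto_one_div_add_atTop_nhds_zero_nat (𝕜 := ℝ))

lemma limitSet_props {X : ℝ → E} (hXc : Continuous X) {C : ℝ} (hXb : ∀ t, ‖X t‖ ≤ C) :
    limitSet X ⊆ Metric.closedBall 0 C ∧ IsCompact (limitSet X) ∧ (limitSet X).Nonempty := by
  have hsub : limitSet X ⊆ Metric.closedBall 0 C := by
    refine subset_trans (iInter_subset _ 0) ?_
    refine closure_minimal ?_ Metric.isClosed_closedBall
    rintro _ ⟨t, _, rfl⟩
    simpa [Metric.mem_closedBall, dist_eq_norm] using hXb t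
  have hclosed : IsClosed (limitSet X) := isClosed_iInter fun _ => isClosed_closure
  have hcpt : IsCompact (limitSet X) :=
    (isCompact_closedBall (0:E) C).of_isClosed_subset hclosed hsub
  refine ⟨hsub, hcpt, ?_⟩
  apply IsCompact.nonempty_iInter_of_directed_nonempty_isCompact_isClosed
  · intro a b
    refine ⟨max a b, closure_mono (monotone_image (Ici_subset_Ici.2 (le_max_left a b))),
      closure_mono (monotone_image (Ici_subset_Ici.2 (le_max_right a b)))⟩
  · exact fun t => ⟨X t, subset_closure (mem_image_of_mem _ self_mem_Ici)⟩
  · intro t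
    refine IsCompact.of_isClosed_subset (isCompact_closedBall (0:E) C) isClosed_closure ?_
    refine closure_minimal ?_ Metric.isClosed_closedBall
    rintro _ ⟨r, _, rfl⟩
    simpa [Metric.mem_closedBall, dist_eq_norm] using hXb r
  · exact fun _ => isClosed_closure

lemma exists_cluster {X : ℝ → E} {C : ℝ} (hXb : ∀ t, ‖X t‖ ≤ C)
    (t : ℕ → ℝ) (ht : Tendsto t atTop atTop) :
    ∃ p ∈ limitSet X, ∃ ψ : ℕ → ℕ, StrictMono ψ ∧
      Tendsto (fun n => X (t (ψ n))) atTop (𝓝 p) := by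
  have hmem : ∀ n, X (t n) ∈ Metric.closedBall (0:E) C := fun n => by
    simpa [Metric.mem_closedBall, dist_eq_norm] using hXb (t n)
  obtain ⟨p, _, ψ, hψ, hconv⟩ :=
    tendsto_subseq_of_bounded Metric.isBounded_closedBall hmem
  refine ⟨p, mem_limitSet_of_seq (fun n => t (ψ n))
      (ht.comp hψ.tendsto_atTop) hconv, ψ, hψ, hconv⟩

lemma eventually_infDist_lt {X : ℝ → E} {C : ℝ} (hXb : ∀ t, ‖X t‖ ≤ C)
    {ε : ℝ} (hε : 0 < ε) :
    ∀ᶠ t in atTop, Metric.infDist (X t) (limitSet X) < ε := by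
  by_contra hcon
  rw [Filter.not_eventually] at hcon
  have h : ∀ n : ℕ, ∃ r : ℝ, r ≥ n ∧ ¬ Metric.infDist (X r) (limitSet X) < ε := by
    intro n
    exact ((frequently_atTop).1 hcon) n
  choose t ht1 ht2 using h
  obtain ⟨p, hpL, ψ, hψ, hconv⟩ := exists_cluster hXb t
    (tendsto_atTop_mono ht1 tendsto_natCast_atTop_atTop)
  have hcont : Tendsto (fun n => Metric.infDist (X (t (ψ n))) (limitSet X)) atTop
      (𝓝 (Metric.infDist p (limitSet X))) :=
    ((Metric.continuous_infDist_pt (limitSet X)).continuousAt.tendsto).comp hconv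
  rw [Metric.infDist_zero_of_mem hpL] at hcont
  have : ∀ n, ε ≤ Metric.infDist (X (t (ψ n))) (limitSet X) :=
    fun n => not_lt.1 (ht2 (ψ n))
  have := le_of_tendsto_of_tendsto' tendsto_const_nhds hcont this
  linarith

lemma limitSet_connected {X : ℝ → E} (hXc : Continuous X) {C : ℝ}
    (hXb : ∀ t, ‖X t‖ ≤ C) : IsPreconnected (limitSet X) := by
  obtain ⟨hsub, hcpt, hne⟩ := limitSet_props hXc hXb
  set L := limitSet X with hL
  have hclosed : IsClosed L := hcpt.isClosed
  intro u v hu hv hsubuv hneu hnev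
  by_contra hcon
  rw [not_nonempty_iff_eq_empty] at hcon
  set A : Set E := L ∩ u with hA
  set B : Set E := L ∩ v with hB
  have hAeq : A = L \ v := by
    apply Subset.antisymm
    · intro y hy
      refine ⟨hy.1, fun hyv => ?_⟩
      have : y ∈ L ∩ (u ∩ v) := ⟨hy.1, hy.2, hyv⟩
      rw [hcon] at this
      exact this
    · rintro y ⟨hyL, hyv⟩
      rcases hsubuv hyL with h | h
      · exact ⟨hyL, h⟩
      · exact absurd h hyv
  have hBeq : B = L \ u := by
    apply Subset.antisymm
    · intro y hy
      refine ⟨hy.1, fun hyu => ?_⟩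
      have : y ∈ L ∩ (u ∩ v) := ⟨hy.1, hyu, hy.2⟩
      rw [hcon] at this
      exact this
    · rintro y ⟨hyL, hyu⟩
      rcases hsubuv hyL with h | h
      · exact absurd h hyu
      · exact ⟨hyL, h⟩
  have hAclosed : IsClosed A := hAeq ▸ hclosed.sdiff hv
  have hBclosed : IsClosed B := hBeq ▸ hclosed.sdiff hu
  have hAcpt : IsCompact A := hcpt.of_isClosed_subset hAclosed (inter_subset_left)
  have hBcpt : IsCompact B := hcpt.of_isClosed_subset hBclosed (inter_subset_left)
  have hABunion : A ∪ B = L := by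
    apply Subset.antisymm (union_subset inter_subset_left inter_subset_left)
    intro y hy
    rcases hsubuv hy with h | h
    · exact Or.inl ⟨hy, h⟩
    · exact Or.inr ⟨hy, h⟩
  have hAne : A.Nonempty := hneu
  have hBne : B.Nonempty := hnev
  -- positive separation
  obtain ⟨a₀, ha₀A, ha₀min⟩ := hAcpt.exists_isMinOn hAne
    ((Metric.continuous_infDist_pt B).continuousOn)
  set d : ℝ := Metric.infDist a₀ B with hd
  have hd0 : 0 < d := by
    rw [hd, ← hBclosed.notMem_iff_infDist_pos hBne]
    intro hmem
    have : a₀ ∈ L ∩ (u ∩ v) := ⟨ha₀A.1, ha₀A.2, hmem.2⟩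
    rw [hcon] at this
    exact this
  have hsep : ∀ y : E, d ≤ Metric.infDist y A + Metric.infDist y B := by
    intro y
    obtain ⟨a, haA, hay⟩ := hAcpt.exists_infDist_eq_dist hAne y
    obtain ⟨b, hbB, hby⟩ := hBcpt.exists_infDist_eq_dist hBne y
    have h1 : d ≤ Metric.infDist a B := ha₀min haA
    have h2 : Metric.infDist a B ≤ dist a b := Metric.infDist_le_dist_of_mem hbB
    have h3 : dist a b ≤ dist a y + dist y b := dist_triangle _ _ _
    rw [hay, hby]
    rw [dist_comm y a] at *
    linarith
  set ε : ℝ := d / 3 with hε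
  have hε0 : 0 < ε := by positivity
  -- times near A and times near B
  have hnearA : ∀ n : ℝ, ∃ t ≥ n, Metric.infDist (X t) A < ε := by
    intro n
    obtain ⟨a, haA⟩ := hAne
    obtain ⟨s, hs1, hs2⟩ := exists_seq_of_mem_limitSet (X := X) haA.1
    have h1 : ∀ᶠ k in atTop, s k ≥ n := hs1.eventually_ge_atTop n
    have h2 : ∀ᶠ k in atTop, dist (X (s k)) a < ε :=
      (Metric.tendsto_nhds.1 hs2) ε hε0
    obtain ⟨k, hk1, hk2⟩ := (h1.and h2).exists
    exact ⟨s k, hk1, lt_of_le_of_lt (Metric.infDist_le_dist_of_mem haA) hk2⟩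
  have hnearB : ∀ n : ℝ, ∃ t ≥ n, Metric.infDist (X t) B < ε := by
    intro n
    obtain ⟨b, hbB⟩ := hBne
    obtain ⟨s, hs1, hs2⟩ := exists_seq_of_mem_limitSet (X := X) hbB.1
    have h1 : ∀ᶠ k in atTop, s k ≥ n := hs1.eventually_ge_atTop n
    have h2 : ∀ᶠ k in atTop, dist (X (s k)) b < ε :=
      (Metric.tendsto_nhds.1 hs2) ε hε0
    obtain ⟨k, hk1, hk2⟩ := (h1.and h2).exists
    exact ⟨s k, hk1, lt_of_le_of_lt (Metric.infDist_le_dist_of_mem hbB) hk2⟩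
  -- crossing times via IVT
  set f : ℝ → ℝ := fun t => Metric.infDist (X t) A with hf
  have hfc : Continuous f := (Metric.continuous_infDist_pt A).comp hXc
  have hcross : ∀ n : ℕ, ∃ r ≥ (n:ℝ), f r = ε := by
    intro n
    obtain ⟨t₁, ht₁, ht₁A⟩ := hnearA n
    obtain ⟨t₂, ht₂, ht₂B⟩ := hnearB t₁
    have ht₂A : ε ≤ f t₂ := by
      have := hsep (X t₂)
      have : d - ε ≤ f t₂ := by
        rw [hf]
        dsimp only
        linarith [hsep (X t₂), ht₂B.le]
      linarith
    have : ε ∈ Icc (f t₁) (f t₂) := ⟨ht₁A.le, ht₂A⟩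
    obtain ⟨r, hr, hrε⟩ := intermediate_value_Icc ht₂ hfc.continuousOn this
    exact ⟨r, le_trans ht₁ hr.1, hrε⟩
  choose r hr1 hr2 using hcross
  obtain ⟨p, hpL, ψ, hψ, hconv⟩ := exists_cluster hXb r
    (tendsto_atTop_mono hr1 tendsto_natCast_atTop_atTop)
  have hfp : Metric.infDist p A = ε := by
    have : Tendsto (fun n => f (r (ψ n))) atTop (𝓝 (Metric.infDist p A)) :=
      ((Metric.continuous_infDist_pt A).continuousAt.tendsto).comp hconv
    have heq : (fun n => f (r (ψ n))) = fun _ => ε := funext fun n => hr2 (ψ n)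
    rw [heq] at this
    exact (tendsto_const_nhds_iff.1 this).symm
  have hgp : d - ε ≤ Metric.infDist p B := by
    have hc : Tendsto (fun n => Metric.infDist (X (r (ψ n))) B) atTop
        (𝓝 (Metric.infDist p B)) :=
      ((Metric.continuous_infDist_pt B).continuousAt.tendsto).comp hconv
    refine le_of_tendsto_of_tendsto' tendsto_const_nhds hc fun n => ?_
    have := hsep (X (r (ψ n)))
    have := hr2 (ψ n)
    rw [hf] at this
    dsimp only at this
    linarith [hsep (X (r (ψ n)))]
  have hpAB : p ∈ A ∪ B := by rw [hABunion]; exact hpL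
  rcases hpAB with hpA | hpB
  · rw [Metric.infDist_zero_of_mem hpA] at hfp
    linarith
  · rw [Metric.infDist_zero_of_mem hpB] at hgp
    linarith

lemma V_mono (F : E → E) (φ : ℝ → E → E) (V : E → ℝ) (hF : ContDiff ℝ 1 F)
    (hφ : IsFlowOf F φ) (hLyap : ∀ x, F x ≠ 0 → ∀ t > (0:ℝ), V (φ t x) < V x) :
    ∀ x : E, ∀ t : ℝ, 0 ≤ t → V (φ t x) ≤ V x := by
  intro x t ht
  by_cases hx : F x = 0
  · rw [eq_fixed F φ hF hφ hx ht]
  · rcases eq_or_lt_of_le ht with h | h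
    · rw [← h, hφ.1]
    · exact (hLyap x hx t h).le

lemma limitSet_fwd_one (F : E → E) (φ : ℝ → E → E) (X : ℝ → E)
    (hF : ContDiff ℝ 1 F) (hφ : IsFlowOf F φ) (hX : IsAPT φ X)
    {p : E} (hp : p ∈ limitSet X) : φ 1 p ∈ limitSet X := by
  obtain ⟨s, hs1, hs2⟩ := exists_seq_of_mem_limitSet hp
  refine mem_limitSet_of_seq (fun n => s n + 1)
    (tendsto_atTop_add_const_right _ 1 hs1) ?_
  rw [Metric.tendsto_nhds]
  intro ε hε
  obtain ⟨δ, hδ0, hδ⟩ := flow_cont_x F φ hF hφ p (by linarith : (0:ℝ) < ε/3)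
  obtain ⟨t₀, ht₀⟩ := hX 1 one_pos (ε/3) (by linarith)
  have h1 : ∀ᶠ n in atTop, s n ≥ t₀ := hs1.eventually_ge_atTop t₀
  have h2 : ∀ᶠ n in atTop, dist (X (s n)) p ≤ δ :=
    (Metric.tendsto_nhds.1 hs2 δ hδ0).mono fun n h => h.le
  filter_upwards [h1, h2] with n hn1 hn2
  have hAPT : ‖X (s n + 1) - φ 1 (X (s n))‖ ≤ ε/3 :=
    ht₀ (s n) hn1 1 ⟨zero_le_one, le_rfl⟩
  have hflow : dist (φ 1 (X (s n))) (φ 1 p) ≤ ε/3 :=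
    hδ (X (s n)) hn2 1 ⟨zero_le_one, le_rfl⟩
  calc dist (X (s n + 1)) (φ 1 p)
      ≤ dist (X (s n + 1)) (φ 1 (X (s n))) + dist (φ 1 (X (s n))) (φ 1 p) :=
        dist_triangle _ _ _
    _ ≤ ε/3 + ε/3 := by
        rw [dist_eq_norm]
        exact add_le_add hAPT hflow
    _ < ε := by linarith

/-- if `L(X) ∩ Eq(F)` is countable and `V(L(X) ∩ Eq(F))` has empty
interior, then the bounded APT `X` converges to a single equilibrium. -/
theorem apt_tendsto_of_countable {m : ℕ}
    (F : EuclideanSpace ℝ (Fin m) → EuclideanSpace ℝ (Fin m))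
    (φ : ℝ → EuclideanSpace ℝ (Fin m) → EuclideanSpace ℝ (Fin m))
    (V : EuclideanSpace ℝ (Fin m) → ℝ) (X : ℝ → EuclideanSpace ℝ (Fin m))
    (hF : ContDiff ℝ 1 F) (hφ : IsFlowOf F φ)
    (hVc : ContDiff ℝ 1 V)
    (hLyap : ∀ x, F x ≠ 0 → ∀ t > (0:ℝ), V (φ t x) < V x)
    (hX : IsAPT φ X) (hXc : Continuous X) (hXb : ∃ C : ℝ, ∀ t, ‖X t‖ ≤ C)
    (hcount : (limitSet X ∩ {x | F x = 0}).Countable)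
    (hint : interior (V '' (limitSet X ∩ {x | F x = 0})) = ∅) :
    ∃ p : EuclideanSpace ℝ (Fin m), F p = 0 ∧ Tendsto X atTop (𝓝 p) := by
  classical
  obtain ⟨C, hXb⟩ := hXb
  obtain ⟨hsubL, hcpt, hneL⟩ := limitSet_props hXc hXb
  have hVcont : Continuous V := hVc.continuous
  -- Step 1 : V is constant on the limit set
  have hconst : ∃ a : ℝ, ∀ x ∈ limitSet X, V x = a := by
    have himgcpt : IsCompact (V '' limitSet X) := hcpt.image hVcont
    have himgne : (V '' limitSet X).Nonempty := hneL.image V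
    set a := sInf (V '' limitSet X) with hadef
    set b := sSup (V '' limitSet X) with hbdef
    have hamem : a ∈ V '' limitSet X := himgcpt.sInf_mem himgne
    have hbmem : b ∈ V '' limitSet X := himgcpt.sSup_mem himgne
    have hbddA : BddAbove (V '' limitSet X) := himgcpt.bddAbove
    have hbddB : BddBelow (V '' limitSet X) := himgcpt.bddBelow
    have hab : a ≤ b := csInf_le_csSup himgne hbddB hbddA
    suffices hkey : a = b by
      refine ⟨a, fun x hx => le_antisymm ?_ ?_⟩
      · rw [hkey]; exact le_csSup hbddA (mem_image_of_mem V hx)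
      · exact csInf_le hbddB (mem_image_of_mem V hx)
    by_contra hne'
    have hlt : a < b := lt_of_le_of_ne hab hne'
    -- choose a regular level `c`
    obtain ⟨c, hcmem, hcnot⟩ : ∃ c ∈ Ioo a b, c ∉ V '' (limitSet X ∩ {x | F x = 0}) := by
      by_contra hcc
      push_neg at hcc
      have hsubint : Ioo a b ⊆ interior (V '' (limitSet X ∩ {x | F x = 0})) :=
        (IsOpen.subset_interior_iff isOpen_Ioo).2 hcc
      rw [hint] at hsubint
      exact (nonempty_Ioo.2 hlt).ne_empty (eq_empty_iff_forall_notMem.2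
        fun z hz => hsubint hz)
    set β : ℝ := (b - c)/4 with hβdef
    have hβ0 : 0 < β := by
      have := hcmem.2
      rw [hβdef]; linarith
    -- the level set K
    set K : Set (EuclideanSpace ℝ (Fin m)) := limitSet X ∩ V ⁻¹' {c} with hKdef
    have hKcl : IsClosed K := hcpt.isClosed.inter (isClosed_singleton.preimage hVcont)
    have hKcpt : IsCompact K := hcpt.of_isClosed_subset hKcl inter_subset_left
    have hKne : K.Nonempty := by
      have hconnV : IsPreconnected (V '' limitSet X) :=
        (limitSet_connected hXc hXb).image V hVcont.continuousOn
      have hIcc : Icc a b ⊆ V '' limitSet X := hconnV.Icc_subset hamem hbmem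
      obtain ⟨xc, hxcL, hxcV⟩ := hIcc ⟨hcmem.1.le, hcmem.2.le⟩
      exact ⟨xc, hxcL, by simpa using hxcV⟩
    have hKF : ∀ x ∈ K, F x ≠ 0 := by
      intro x hx hF0
      exact hcnot ⟨x, ⟨hx.1, hF0⟩, hx.2⟩
    -- local covering data around each point of K
    have hcover : ∀ x ∈ K, ∃ ε > 0, ∃ δ > 0, ∀ y ∈ Metric.ball x ε,
        V (φ 1 y) ≤ c - δ ∧ ∀ h ∈ Icc (0:ℝ) 1, V (φ h y) ≤ c + β := by
      intro x hxK
      have hVx : V x = c := hxK.2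
      have hV1 : V (φ 1 x) < c := by
        have := hLyap x (hKF x hxK) 1 one_pos
        rwa [hVx] at this
      set δ : ℝ := (c - V (φ 1 x))/2 with hδdef
      have hδ0 : 0 < δ := by rw [hδdef]; linarith
      -- bound the orbit of x
      have hco : Continuous (fun τ => φ τ x) := flow_cont_t F φ hφ x
      obtain ⟨R₀, hR₀⟩ :=
        ((isCompact_Icc.image hco).isBounded.subset_closedBall (0:EuclideanSpace ℝ (Fin m)))
      -- uniform continuity of V on a big ball
      have hunif := (isCompact_closedBall (0:EuclideanSpace ℝ (Fin m))
        (R₀ + 2)).uniformContinuousOn_of_continuous hVcont.continuousOn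
      rw [Metric.uniformContinuousOn_iff] at hunif
      obtain ⟨η, hη0, hηprop⟩ := hunif (min δ β) (lt_min hδ0 hβ0)
      obtain ⟨ε, hε0, hεprop⟩ := flow_cont_x F φ hF hφ x
        (lt_min (half_pos hη0) one_pos)
      refine ⟨ε, hε0, δ, hδ0, fun y hy => ?_⟩
      have hflow : ∀ h ∈ Icc (0:ℝ) 1, dist (φ h y) (φ h x) ≤ min (η/2) 1 :=
        hεprop y (Metric.mem_ball.1 hy).le
      have horbx : ∀ h ∈ Icc (0:ℝ) 1,
          φ h x ∈ Metric.closedBall (0:EuclideanSpace ℝ (Fin m)) (R₀ + 2) := by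
        intro h hh
        have h1 : φ h x ∈ (fun τ => φ τ x) '' Icc 0 1 := mem_image_of_mem _ hh
        have h2 := hR₀ h1
        rw [Metric.mem_closedBall] at h2 ⊢
        have : (0:ℝ) ≤ 2 := by norm_num
        linarith
      have horby : ∀ h ∈ Icc (0:ℝ) 1,
          φ h y ∈ Metric.closedBall (0:EuclideanSpace ℝ (Fin m)) (R₀ + 2) := by
        intro h hh
        have h1 := hflow h hh
        have h2 := hR₀ (mem_image_of_mem (fun τ => φ τ x) hh)
        rw [Metric.mem_closedBall] at h2 ⊢
        have h3 : dist (φ h y) (0:EuclideanSpace ℝ (Fin m)) ≤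
            dist (φ h y) (φ h x) + dist (φ h x) 0 := dist_triangle _ _ _
        have h4 : min (η/2) 1 ≤ 1 := min_le_right _ _
        linarith
      have hVclose : ∀ h ∈ Icc (0:ℝ) 1, |V (φ h y) - V (φ h x)| < min δ β := by
        intro h hh
        have := hηprop (φ h y) (horby h hh) (φ h x) (horbx h hh)
          (lt_of_le_of_lt (hflow h hh)
            (lt_of_le_of_lt (min_le_left _ _) (half_lt_self hη0)))
        rwa [Real.dist_eq] at this
      constructor
      · have h1 := hVclose 1 ⟨zero_le_one, le_rfl⟩
        have h2 : V (φ 1 y) - V (φ 1 x) ≤ min δ β := (abs_le.1 h1.le).2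
        have h3 : min δ β ≤ δ := min_le_left _ _
        have h4 : V (φ 1 x) = c - 2*δ := by rw [hδdef]; ring
        linarith
      · intro h hh
        have h1 := hVclose h hh
        have h2 : V (φ h y) - V (φ h x) ≤ min δ β := (abs_le.1 h1.le).2
        have h3 : min δ β ≤ β := min_le_right _ _
        have h4 : V (φ h x) ≤ c := by
          have := V_mono F φ V hF hφ hLyap x h hh.1
          rwa [hVx] at this
        linarith
    choose! εf hεf δf hδf hPf using hcover
    -- finite subcover
    have hKcov : K ⊆ ⋃ x ∈ K, Metric.ball x (εf x) := by
      intro y hy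
      exact mem_biUnion hy (Metric.mem_ball_self (hεf y hy))
    obtain ⟨b', hb'K, hb'fin, hb'cov⟩ := hKcpt.elim_finite_subcover_image
      (fun x _ => Metric.isOpen_ball) hKcov
    set U : Set (EuclideanSpace ℝ (Fin m)) := ⋃ x ∈ b', Metric.ball x (εf x) with hUdef
    have hUopen : IsOpen U := isOpen_biUnion fun x _ => Metric.isOpen_ball
    have hKU : K ⊆ U := hb'cov
    have hb'ne : b'.Nonempty := by
      obtain ⟨y, hy⟩ := hKne
      obtain ⟨x, hx, -⟩ := mem_iUnion₂.1 (hKU hy)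
      exact ⟨x, hx⟩
    obtain ⟨x₀, hx₀b', hx₀min⟩ := hb'fin.toFinset.exists_min_image δf
      (by rwa [Set.Finite.toFinset_nonempty])
    rw [Set.Finite.mem_toFinset] at hx₀b'
    set δ : ℝ := δf x₀ with hδdef
    have hδ0 : 0 < δ := hδf x₀ (hb'K hx₀b')
    have hU : ∀ y ∈ U, V (φ 1 y) ≤ c - δ ∧ ∀ h ∈ Icc (0:ℝ) 1, V (φ h y) ≤ c + β := by
      intro y hy
      obtain ⟨x, hxb', hyx⟩ := mem_iUnion₂.1 hy
      have hxK : x ∈ K := hb'K hxb'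
      obtain ⟨h1, h2⟩ := hPf x hxK y hyx
      have hmin : δ ≤ δf x := hx₀min x (hb'fin.mem_toFinset.2 hxb')
      exact ⟨by linarith, h2⟩
    -- points with value c close to the limit set lie in U
    obtain ⟨ρ, hρ0, hρ⟩ : ∃ ρ > 0, ∀ y : EuclideanSpace ℝ (Fin m), ‖y‖ ≤ C →
        Metric.infDist y (limitSet X) ≤ ρ → V y = c → y ∈ U := by
      by_contra hcon
      push_neg at hcon
      have hstep : ∀ n : ℕ, ∃ y : EuclideanSpace ℝ (Fin m), ‖y‖ ≤ C ∧
          Metric.infDist y (limitSet X) ≤ 1/(n+1) ∧ V y = c ∧ y ∉ U := by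
        intro n
        obtain ⟨y, h1, h2, h3, h4⟩ := hcon (1/(n+1)) (by positivity)
        exact ⟨y, h1, h2, h3, h4⟩
      choose y hy1 hy2 hy3 hy4 using hstep
      have hymem : ∀ n, y n ∈ Metric.closedBall (0:EuclideanSpace ℝ (Fin m)) C := by
        intro n
        rw [Metric.mem_closedBall, dist_eq_norm, sub_zero]
        exact hy1 n
      obtain ⟨q, -, ψ, hψ, hconv⟩ :=
        tendsto_subseq_of_bounded Metric.isBounded_closedBall hymem
      have hqL : q ∈ limitSet X := by
        have hlim : Tendsto (fun k => Metric.infDist (y (ψ k)) (limitSet X)) atTop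
            (𝓝 (Metric.infDist q (limitSet X))) :=
          ((Metric.continuous_infDist_pt (limitSet X)).continuousAt.tendsto).comp hconv
        have hzero : Tendsto (fun k => Metric.infDist (y (ψ k)) (limitSet X)) atTop (𝓝 0) := by
          refine squeeze_zero (f := fun k => Metric.infDist (y (ψ k)) (limitSet X)) (g := fun k => 1/((k:ℝ)+1))
            (fun k => Metric.infDist_nonneg) (fun k => ?_) ?_
          · refine le_trans (hy2 (ψ k)) (one_div_le_one_div_of_le (by positivity) ?_)
            have h : (k:ℝ) ≤ (ψ k : ℝ) := by exact_mod_cast hψ.le_apply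
            linarith
          · simpa using (tendsto_one_div_add_atTop_nhds_zero_nat (𝕜 := ℝ))
        have heq : Metric.infDist q (limitSet X) = 0 := tendsto_nhds_unique hlim hzero
        exact (hcpt.isClosed.mem_iff_infDist_zero hneL).2 heq
      have hqV : V q = c := by
        have h1 : Tendsto (fun k => V (y (ψ k))) atTop (𝓝 (V q)) :=
          (hVcont.continuousAt.tendsto).comp hconv
        have h2 : (fun k => V (y (ψ k))) = fun _ => c := funext fun k => hy3 (ψ k)
        rw [h2] at h1
        exact (tendsto_const_nhds_iff.1 h1).symm
      have hqK : q ∈ K := ⟨hqL, by simpa using hqV⟩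
      have hev : ∀ᶠ k in atTop, y (ψ k) ∈ U :=
        hconv.eventually (hUopen.mem_nhds (hKU hqK))
      obtain ⟨k, hk⟩ := hev.exists
      exact hy4 (ψ k) hk
    -- uniform continuity of V on the ball of radius C+1
    have hunifC := (isCompact_closedBall (0:EuclideanSpace ℝ (Fin m))
      (C + 1)).uniformContinuousOn_of_continuous hVcont.continuousOn
    rw [Metric.uniformContinuousOn_iff] at hunifC
    obtain ⟨εA, hεA0, hεAprop⟩ := hunifC (min (δ/2) β) (lt_min (by linarith) hβ0)
    set εT : ℝ := min (εA/2) 1 with hεTdef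
    have hεT0 : 0 < εT := lt_min (by linarith) one_pos
    obtain ⟨t₀, ht₀⟩ := hX 1 one_pos εT hεT0
    obtain ⟨tρ, htρ⟩ := eventually_atTop.1 (eventually_infDist_lt hXb hρ0 (X := X))
    set v : ℝ → ℝ := fun t => V (X t) with hvdef
    have hvc : Continuous v := hVcont.comp hXc
    -- times where v is below c, and above c + 3β
    have hlow : ∀ n : ℝ, ∃ t ≥ n, v t < c := by
      obtain ⟨xa, hxaL, hxaV⟩ := hamem
      obtain ⟨s, hs1, hs2⟩ := exists_seq_of_mem_limitSet (X := X) hxaL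
      intro n
      have h1 : ∀ᶠ k in atTop, s k ≥ n := hs1.eventually_ge_atTop n
      have h2 : ∀ᶠ k in atTop, v (s k) < c := by
        have hten : Tendsto (fun k => v (s k)) atTop (𝓝 a) := by
          rw [← hxaV]
          exact (hVcont.continuousAt.tendsto).comp hs2
        exact hten.eventually_lt_const hcmem.1
      obtain ⟨k, hk1, hk2⟩ := (h1.and h2).exists
      exact ⟨s k, hk1, hk2⟩
    have hhigh : ∀ n : ℝ, ∃ t ≥ n, c + 3*β < v t := by
      obtain ⟨xb, hxbL, hxbV⟩ := hbmem
      obtain ⟨s, hs1, hs2⟩ := exists_seq_of_mem_limitSet (X := X) hxbL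
      intro n
      have h1 : ∀ᶠ k in atTop, s k ≥ n := hs1.eventually_ge_atTop n
      have h2 : ∀ᶠ k in atTop, c + 3*β < v (s k) := by
        have hten : Tendsto (fun k => v (s k)) atTop (𝓝 b) := by
          rw [← hxbV]
          exact (hVcont.continuousAt.tendsto).comp hs2
        refine hten.eventually_const_lt ?_
        rw [hβdef]; linarith [hcmem.2]
      obtain ⟨k, hk1, hk2⟩ := (h1.and h2).exists
      exact ⟨s k, hk1, hk2⟩
    -- crossing construction
    obtain ⟨t₁, ht₁T, ht₁v⟩ := hlow (max t₀ tρ)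
    obtain ⟨u, hut₁, huv⟩ := hhigh t₁
    have ht₁u : t₁ < u := by
      rcases eq_or_lt_of_le hut₁ with h | h
      · exfalso; rw [h] at ht₁v; linarith
      · exact h
    set S : Set ℝ := Icc t₁ u ∩ {t | v t ≤ c} with hSdef
    have hSne : S.Nonempty := ⟨t₁, ⟨le_rfl, ht₁u.le⟩, ht₁v.le⟩
    have hSbdd : BddAbove S := ⟨u, fun t ht => ht.1.2⟩
    have hScl : IsClosed S := isClosed_Icc.inter (isClosed_le hvc continuous_const)
    set s : ℝ := sSup S with hsdef
    have hsS : s ∈ S := hScl.csSup_mem hSne hSbdd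
    have hst₁ : t₁ ≤ s := le_csSup hSbdd ⟨⟨le_rfl, ht₁u.le⟩, ht₁v.le⟩
    have hsu' : s ≤ u := csSup_le hSne fun t ht => ht.1.2
    have hsu : s < u := by
      rcases eq_or_lt_of_le hsu' with h | h
      · exfalso
        have := hsS.2
        rw [h] at this
        simp only [mem_setOf_eq] at this
        linarith
      · exact h
    have hgt : ∀ t, s < t → t ≤ u → c < v t := by
      intro t h1 h2
      by_contra hle
      push_neg at hle
      have htS : t ∈ S := ⟨⟨le_trans hst₁ h1.le, h2⟩, hle⟩
      exact absurd (le_csSup hSbdd htS) (not_le.2 h1)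
    have hvs : v s = c := by
      refine le_antisymm hsS.2 ?_
      by_contra hlt
      push_neg at hlt
      have hopen : IsOpen {t : ℝ | v t < c} := isOpen_lt hvc continuous_const
      obtain ⟨w, hw0, hwball⟩ := Metric.isOpen_iff.1 hopen s hlt
      set t : ℝ := min (s + w/2) u with htdef
      have hts : s < t := lt_min (by linarith) hsu
      have htu : t ≤ u := min_le_right _ _
      have htball : t ∈ Metric.ball s w := by
        rw [Metric.mem_ball, Real.dist_eq, abs_lt]
        constructor
        · linarith [min_le_right (s + w/2) u]
        · have := min_le_left (s + w/2) u
          linarith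
      have := hwball htball
      exact absurd this (not_lt.2 (hgt t hts htu).le)
    -- `X s` lies in `U`
    have hst₀ : t₀ ≤ s := le_trans (le_max_left t₀ tρ) (le_trans ht₁T hst₁)
    have hstρ : tρ ≤ s := le_trans (le_max_right t₀ tρ) (le_trans ht₁T hst₁)
    have hXsU : X s ∈ U := hρ (X s) (hXb s) (htρ s hstρ).le hvs
    obtain ⟨hU1, hU2⟩ := hU (X s) hXsU
    have hmemC : ∀ z : ℝ, X z ∈ Metric.closedBall (0:EuclideanSpace ℝ (Fin m)) (C+1) := by
      intro z
      rw [Metric.mem_closedBall, dist_eq_norm, sub_zero]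
      linarith [hXb z]
    by_cases hcase : u ≤ s + 1
    · set h : ℝ := u - s with hhdef
      have hh : h ∈ Icc (0:ℝ) 1 := ⟨by linarith, by linarith⟩
      have hAPT := ht₀ s hst₀ h hh
      rw [show s + h = u by rw [hhdef]; ring] at hAPT
      have hφmem : φ h (X s) ∈ Metric.closedBall (0:EuclideanSpace ℝ (Fin m)) (C+1) := by
        rw [Metric.mem_closedBall, dist_eq_norm, sub_zero]
        have h1 : ‖φ h (X s)‖ ≤ ‖X u‖ + ‖X u - φ h (X s)‖ := by
          have h3 : ‖φ h (X s)‖ - ‖X u‖ ≤ ‖X u - φ h (X s)‖ :=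
            le_of_le_of_eq (norm_sub_norm_le (φ h (X s)) (X u)) (norm_sub_rev _ _)
          linarith
        have h2 : εT ≤ 1 := min_le_right _ _
        linarith [hXb u, le_trans hAPT h2]
      have hclose := hεAprop (X u) (hmemC u) (φ h (X s)) hφmem (by
        rw [dist_eq_norm]
        exact lt_of_le_of_lt (le_trans hAPT (min_le_left _ _)) (by linarith))
      rw [Real.dist_eq] at hclose
      have habs := (abs_lt.1 hclose).2
      have hVφ : V (φ h (X s)) ≤ c + β := hU2 h hh
      have hminβ : min (δ/2) β ≤ β := min_le_right _ _
      have : v u ≤ c + 2*β := by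
        have : V (X u) - V (φ h (X s)) < min (δ/2) β := habs
        simp only [hvdef]
        linarith
      linarith
    · push_neg at hcase
      have hh1 : (1:ℝ) ∈ Icc (0:ℝ) 1 := ⟨zero_le_one, le_rfl⟩
      have hAPT := ht₀ s hst₀ 1 hh1
      have hφmem : φ 1 (X s) ∈ Metric.closedBall (0:EuclideanSpace ℝ (Fin m)) (C+1) := by
        rw [Metric.mem_closedBall, dist_eq_norm, sub_zero]
        have h3 : ‖φ 1 (X s)‖ - ‖X (s+1)‖ ≤ ‖X (s+1) - φ 1 (X s)‖ :=
          le_of_le_of_eq (norm_sub_norm_le (φ 1 (X s)) (X (s+1))) (norm_sub_rev _ _)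
        have h2 : εT ≤ 1 := min_le_right _ _
        linarith [hXb (s+1), le_trans hAPT h2]
      have hclose := hεAprop (X (s+1)) (hmemC (s+1)) (φ 1 (X s)) hφmem (by
        rw [dist_eq_norm]
        exact lt_of_le_of_lt (le_trans hAPT (min_le_left _ _)) (by linarith))
      rw [Real.dist_eq] at hclose
      have habs := (abs_lt.1 hclose).2
      have hminδ : min (δ/2) β ≤ δ/2 := min_le_left _ _
      have hlow1 : v (s+1) < c := by
        simp only [hvdef]
        linarith
      have := hgt (s+1) (by linarith) (by linarith)
      linarith
  -- Step 2 : the limit set consists of equilibria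
  have hLEq : ∀ x ∈ limitSet X, F x = 0 := by
    obtain ⟨a, ha⟩ := hconst
    intro x hxL
    by_contra hFx
    have h1 : φ 1 x ∈ limitSet X := limitSet_fwd_one F φ X hF hφ hX hxL
    have h2 := hLyap x hFx 1 one_pos
    rw [ha x hxL, ha _ h1] at h2
    exact lt_irrefl a h2
  -- Step 3 : the limit set is a singleton
  obtain ⟨p, hpL⟩ := hneL
  have hcountL : (limitSet X).Countable := by
    have heq : limitSet X ∩ {x | F x = 0} = limitSet X :=
      inter_eq_self_of_subset_left (fun x hx => hLEq x hx)
    rw [← heq]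
    exact hcount
  have hLp : limitSet X = {p} := by
    apply Subset.antisymm _ (singleton_subset_iff.2 hpL)
    intro q hqL
    by_contra hqp
    set f : EuclideanSpace ℝ (Fin m) → ℝ := fun y => dist p y with hfdef
    have hconn : IsPreconnected (f '' limitSet X) :=
      (limitSet_connected hXc hXb).image f (Continuous.continuousOn (by fun_prop))
    have h0 : (0:ℝ) ∈ f '' limitSet X := ⟨p, hpL, dist_self p⟩
    have hd : dist p q ∈ f '' limitSet X := ⟨q, hqL, rfl⟩
    have hIcc : Icc 0 (dist p q) ⊆ f '' limitSet X := hconn.Icc_subset h0 hd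
    have hcnt : (f '' limitSet X).Countable := hcountL.image f
    have hz : volume (Icc (0:ℝ) (dist p q)) = 0 :=
      measure_mono_null hIcc (hcnt.measure_zero volume)
    rw [Real.volume_Icc] at hz
    have hdpos : 0 < dist p q := dist_pos.2 fun h => hqp (h.symm ▸ rfl)
    rw [ENNReal.ofReal_eq_zero] at hz
    linarith
  refine ⟨p, hLEq p hpL, ?_⟩
  rw [Metric.tendsto_nhds]
  intro ε hε
  filter_upwards [eventually_infDist_lt hXb hε (X := X)] with t ht
  rwa [hLp, Metric.infDist_singleton] at ht
end
end

section
/- Let A be a real m×m matrix and λ ∈ ℝ. Then the following are equivalent: (i) λ is not the real part of any eigenvalue of A; (ii) for every nonzero v ∈ ℝ^m, the function t ↦ ‖e^{t(A - λI)}v‖ is unbounded on ℝ. -/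
open Set Filter Topology MeasureTheory Asymptotics

noncomputable section

open Set NormedSpace Matrix
open scoped Nat

noncomputable section

namespace Statement8Aux

variable {m : ℕ}

lemma exp_mulVec_eigen (M : Matrix (Fin m) (Fin m) ℂ) {w : Fin m → ℂ} {c : ℂ}
    (h : M.mulVec w = c • w) :
    (NormedSpace.exp M).mulVec w = Complex.exp c • w := by
  letI : SeminormedRing (Matrix (Fin m) (Fin m) ℂ) := Matrix.linftyOpSemiNormedRing
  letI : NormedRing (Matrix (Fin m) (Fin m) ℂ) := Matrix.linftyOpNormedRing
  letI : NormedAlgebra ℂ (Matrix (Fin m) (Fin m) ℂ) := Matrix.linftyOpNormedAlgebra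
  have hpow : ∀ n : ℕ, (M ^ n).mulVec w = c ^ n • w := by
    intro n
    induction n with
    | zero => simp [Matrix.one_mulVec]
    | succ n ih =>
      rw [pow_succ, ← Matrix.mulVec_mulVec, h, Matrix.mulVec_smul, ih, smul_smul, pow_succ, mul_comm]
  let E : Matrix (Fin m) (Fin m) ℂ →ₗ[ℂ] (Fin m → ℂ) :=
    { toFun := fun N => N.mulVec w
      map_add' := fun N₁ N₂ => Matrix.add_mulVec _ _ _
      map_smul' := fun r N => by simpa using Matrix.smul_mulVec r N w }
  let EC : Matrix (Fin m) (Fin m) ℂ →L[ℂ] (Fin m → ℂ) := LinearMap.toContinuousLinearMap E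
  have hsum : Summable fun n : ℕ => ((n ! : ℂ))⁻¹ • M ^ n := expSeries_summable' M
  have hc : Summable fun n : ℕ => ((n ! : ℂ))⁻¹ * c ^ n := by
    simpa [smul_eq_mul] using (expSeries_summable' (𝕂 := ℂ) c)
  have hexp : NormedSpace.exp M = ∑' n : ℕ, ((n ! : ℂ))⁻¹ • M ^ n := by
    rw [NormedSpace.exp_eq_tsum (𝕂 := ℂ)]
  calc (NormedSpace.exp M).mulVec w = EC (∑' n : ℕ, ((n ! : ℂ))⁻¹ • M ^ n) := by rw [hexp]; rfl
    _ = ∑' n : ℕ, EC (((n ! : ℂ))⁻¹ • M ^ n) := EC.map_tsum hsum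
    _ = ∑' n : ℕ, (((n ! : ℂ))⁻¹ * c ^ n) • w := by
        refine tsum_congr fun n => ?_
        rw [_root_.map_smul]
        show ((n ! : ℂ))⁻¹ • (M ^ n).mulVec w = _
        rw [hpow n, smul_smul]
    _ = (∑' n : ℕ, ((n ! : ℂ))⁻¹ * c ^ n) • w := hc.tsum_smul_const w
    _ = Complex.exp c • w := by
        rw [Complex.exp_eq_exp_ℂ, NormedSpace.exp_eq_tsum (𝕂 := ℂ)]
        simp [smul_eq_mul]



lemma exp_map_ofReal (M : Matrix (Fin m) (Fin m) ℝ) :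
    (NormedSpace.exp M).map Complex.ofReal
      = NormedSpace.exp (M.map Complex.ofReal) := by
  letI : SeminormedRing (Matrix (Fin m) (Fin m) ℝ) := Matrix.linftyOpSemiNormedRing
  letI : NormedRing (Matrix (Fin m) (Fin m) ℝ) := Matrix.linftyOpNormedRing
  letI : NormedAlgebra ℝ (Matrix (Fin m) (Fin m) ℝ) := Matrix.linftyOpNormedAlgebra
  letI : SeminormedRing (Matrix (Fin m) (Fin m) ℂ) := Matrix.linftyOpSemiNormedRing
  letI : NormedRing (Matrix (Fin m) (Fin m) ℂ) := Matrix.linftyOpNormedRing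
  letI : NormedAlgebra ℝ (Matrix (Fin m) (Fin m) ℂ) := Matrix.linftyOpNormedAlgebra
  have hcont : Continuous
      (Complex.ofRealHom.mapMatrix : Matrix (Fin m) (Fin m) ℝ →+* Matrix (Fin m) (Fin m) ℂ) := by
    let L : Matrix (Fin m) (Fin m) ℝ →ₗ[ℝ] Matrix (Fin m) (Fin m) ℂ :=
      { toFun := fun N => N.map Complex.ofReal
        map_add' := fun N₁ N₂ => by ext i j; simp
        map_smul' := fun r N => by ext i j; simp [Matrix.map_apply, Complex.real_smul] }
    exact L.continuous_of_finiteDimensional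
  letI : NormedAlgebra ℚ (Matrix (Fin m) (Fin m) ℝ) :=
    NormedAlgebra.restrictScalars ℚ ℝ (Matrix (Fin m) (Fin m) ℝ)
  have h := map_exp
    (Complex.ofRealHom.mapMatrix : Matrix (Fin m) (Fin m) ℝ →+* Matrix (Fin m) (Fin m) ℂ) hcont M
  simp only [RingHom.mapMatrix_apply] at h
  exact h

lemma pi_norm_ofReal (v : Fin m → ℝ) : ‖fun i => (v i : ℂ)‖ = ‖v‖ := by
  simp [Pi.norm_def, Pi.nnnorm_def]

lemma mulVec_ofReal (M : Matrix (Fin m) (Fin m) ℝ) (v : Fin m → ℝ) :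
    (fun i => ((M.mulVec v) i : ℂ)) = (M.map Complex.ofReal).mulVec (fun i => (v i : ℂ)) := by
  funext i
  exact RingHom.map_mulVec Complex.ofRealHom M v i

end Statement8Aux

/-- `λ` is not the real part of an eigenvalue of `A` iff
`t ↦ e^{t(A-λI)}v` is unbounded on `ℝ` for every nonzero `v`. -/
theorem not_realPart_eigenvalue_iff_unbounded {m : ℕ}
    (A : Matrix (Fin m) (Fin m) ℝ) (lam : ℝ) :
    (∀ μ ∈ spectrum ℂ (A.map Complex.ofReal), μ.re ≠ lam) ↔
      ∀ v : Fin m → ℝ, v ≠ 0 →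
        ¬ BddAbove (Set.range fun t : ℝ =>
          ‖(NormedSpace.exp (t • (A - lam • (1 : Matrix (Fin m) (Fin m) ℝ)))).mulVec v‖) := by
  classical
  set B : Matrix (Fin m) (Fin m) ℝ := A - lam • 1 with hB
  set Bc : Matrix (Fin m) (Fin m) ℂ := B.map Complex.ofReal with hBcdef
  have hsmulmap : ∀ t : ℝ, (t • B).map Complex.ofReal = (t : ℂ) • Bc := by
    intro t; ext i j
    simp [hBcdef, Matrix.map_apply, Complex.real_smul]
  have hnorm : ∀ (t : ℝ) (v : Fin m → ℝ),
      ‖(NormedSpace.exp (t • B)).mulVec v‖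
        = ‖(NormedSpace.exp ((t : ℂ) • Bc)).mulVec (fun i => (v i : ℂ))‖ := by
    intro t v
    rw [← Statement8Aux.pi_norm_ofReal ((NormedSpace.exp (t • B)).mulVec v),
      Statement8Aux.mulVec_ofReal, Statement8Aux.exp_map_ofReal, hsmulmap]
  have hAc : A.map Complex.ofReal = algebraMap ℂ (Matrix (Fin m) (Fin m) ℂ) (lam : ℂ) + Bc := by
    ext i j
    by_cases hij : i = j <;>
      simp [hBcdef, hB, Matrix.map_apply, Matrix.sub_apply, Matrix.smul_apply, Matrix.one_apply,
        Algebra.algebraMap_eq_smul_one, hij]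
  have hσ : spectrum ℂ (A.map Complex.ofReal) = (fun z : ℂ => (lam : ℂ) + z) '' spectrum ℂ Bc := by
    rw [hAc, ← spectrum.singleton_add_eq, Set.singleton_add]
  have hLin : (Matrix.toLinAlgEquiv' Bc : (Fin m → ℂ) →ₗ[ℂ] (Fin m → ℂ)) = Bc.mulVecLin := by
    ext u; simp [Matrix.toLinAlgEquiv'_apply, Matrix.mulVecLin_apply]
  have hspecLin : spectrum ℂ Bc.mulVecLin = spectrum ℂ Bc := by
    rw [← hLin, AlgEquiv.spectrum_eq]
  have hiff : (∀ μ ∈ spectrum ℂ (A.map Complex.ofReal), μ.re ≠ lam)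
      ↔ ∀ β ∈ spectrum ℂ Bc, β.re ≠ 0 := by
    rw [hσ]
    constructor
    · intro H β hβ h0
      exact H _ ⟨β, hβ, rfl⟩ (by simp [h0])
    · rintro H μ ⟨β, hβ, rfl⟩ h
      simp only [Complex.add_re, Complex.ofReal_re] at h
      exact H β hβ (by linarith)
  rw [hiff]
  constructor
  · intro H v hv hbdd
    obtain ⟨C, hC⟩ := hbdd
    set vc : Fin m → ℂ := fun i => (v i : ℂ) with hvc
    have hCbound : ∀ t : ℝ, ‖(NormedSpace.exp ((t:ℂ) • Bc)).mulVec vc‖ ≤ C := by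
      intro t
      rw [← hnorm]
      exact hC (Set.mem_range_self t)
    have hvc0 : vc ≠ 0 := by
      intro h0
      apply hv
      funext i
      have := congrFun h0 i
      simpa [hvc] using this
    obtain ⟨K, hK0, hKb⟩ : ∃ K, 0 ≤ K ∧ ∀ u : Fin m → ℂ, ‖Bc.mulVec u‖ ≤ K * ‖u‖ := by
      let L := LinearMap.toContinuousLinearMap Bc.mulVecLin
      exact ⟨‖L‖, norm_nonneg _, fun u => L.le_opNorm u⟩
    have hcomm : ∀ t : ℝ,
        NormedSpace.exp ((t:ℂ) • Bc) * Bc = Bc * NormedSpace.exp ((t:ℂ) • Bc) := by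
      intro t
      letI : SeminormedRing (Matrix (Fin m) (Fin m) ℂ) := Matrix.linftyOpSemiNormedRing
      letI : NormedRing (Matrix (Fin m) (Fin m) ℂ) := Matrix.linftyOpNormedRing
      letI : NormedAlgebra ℂ (Matrix (Fin m) (Fin m) ℂ) := Matrix.linftyOpNormedAlgebra
      exact (((Commute.refl Bc).smul_left ((t:ℂ))).exp_left).eq
    let W : Submodule ℂ (Fin m → ℂ) :=
    { carrier := {w | ∃ D, ∀ t : ℝ, ‖(NormedSpace.exp ((t:ℂ) • Bc)).mulVec w‖ ≤ D}
      add_mem' := by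
        rintro a b ⟨Da, ha⟩ ⟨Db, hb⟩
        exact ⟨Da + Db, fun t => by
          rw [Matrix.mulVec_add]
          exact (norm_add_le _ _).trans (add_le_add (ha t) (hb t))⟩
      zero_mem' := ⟨0, fun t => by simp [Matrix.mulVec_zero]⟩
      smul_mem' := by
        rintro c a ⟨Da, ha⟩
        refine ⟨‖c‖ * Da, fun t => ?_⟩
        rw [Matrix.mulVec_smul, norm_smul]
        exact mul_le_mul_of_nonneg_left (ha t) (norm_nonneg _) }
    have hWinv : ∀ w ∈ W, Bc.mulVecLin w ∈ W := by
      rintro w ⟨D, hD⟩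
      refine ⟨K * D, fun t => ?_⟩
      have hcm : (NormedSpace.exp ((t:ℂ) • Bc)).mulVec (Bc.mulVec w)
          = Bc.mulVec ((NormedSpace.exp ((t:ℂ) • Bc)).mulVec w) := by
        rw [Matrix.mulVec_mulVec, Matrix.mulVec_mulVec, hcomm t]
      rw [Matrix.mulVecLin_apply, hcm]
      calc ‖Bc.mulVec ((NormedSpace.exp ((t:ℂ) • Bc)).mulVec w)‖
          ≤ K * ‖(NormedSpace.exp ((t:ℂ) • Bc)).mulVec w‖ := hKb _
        _ ≤ K * D := mul_le_mul_of_nonneg_left (hD t) hK0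
    have hvcW : vc ∈ W := ⟨C, hCbound⟩
    haveI : Nontrivial W := nontrivial_of_ne ⟨vc, hvcW⟩ 0 (by simp [Subtype.ext_iff, hvc0])
    let g : Module.End ℂ W := Bc.mulVecLin.restrict hWinv
    obtain ⟨β, hβ⟩ := Module.End.exists_eigenvalue g
    obtain ⟨w0, hw0⟩ := hβ.exists_hasEigenvector
    have hww : Bc.mulVec (w0 : Fin m → ℂ) = β • (w0 : Fin m → ℂ) := by
      have h := congrArg (Subtype.val) hw0.apply_eq_smul
      simpa [g, LinearMap.restrict_apply] using h
    have hwne : (w0 : Fin m → ℂ) ≠ 0 := fun h => hw0.2 (Subtype.ext h)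
    obtain ⟨D, hD⟩ := w0.2
    have hβspec : β ∈ spectrum ℂ Bc := by
      rw [← hspecLin]
      exact (Module.End.hasEigenvalue_of_hasEigenvector
        ⟨Module.End.mem_eigenspace_iff.mpr (by simpa using hww), hwne⟩).mem_spectrum
    have hβre : β.re ≠ 0 := H β hβspec
    have horb : ∀ t : ℝ, Real.exp (t * β.re) * ‖(w0 : Fin m → ℂ)‖ ≤ D := by
      intro t
      have h1 : ((t:ℂ) • Bc).mulVec (w0 : Fin m → ℂ) = ((t:ℂ) * β) • (w0 : Fin m → ℂ) := by
        rw [Matrix.smul_mulVec, hww, smul_smul]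
      have h3 := hD t
      rw [Statement8Aux.exp_mulVec_eigen _ h1, norm_smul] at h3
      simpa [Complex.norm_exp, Complex.mul_re] using h3
    have hwpos : 0 < ‖(w0 : Fin m → ℂ)‖ := norm_pos_iff.mpr hwne
    have hD0 : ‖(w0 : Fin m → ℂ)‖ ≤ D := by simpa using horb 0
    have hfin := horb (Real.log ((D + 1) / ‖(w0 : Fin m → ℂ)‖) / β.re)
    rw [div_mul_cancel₀ _ hβre, Real.exp_log (div_pos (by linarith) hwpos),
      div_mul_cancel₀ _ (ne_of_gt hwpos)] at hfin
    linarith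
  · intro H β hβ hre0
    have hEig : Module.End.HasEigenvalue Bc.mulVecLin β := by
      apply Module.End.hasEigenvalue_iff_mem_spectrum.mpr
      rw [hspecLin]; exact hβ
    obtain ⟨w, hw⟩ := hEig.exists_hasEigenvector
    have hww : Bc.mulVec w = β • w := by
      simpa using Module.End.mem_eigenspace_iff.mp hw.1
    have horb : ∀ t : ℝ, ‖(NormedSpace.exp ((t:ℂ) • Bc)).mulVec w‖ = ‖w‖ := by
      intro t
      have h1 : ((t:ℂ) • Bc).mulVec w = ((t:ℂ) * β) • w := by
        rw [Matrix.smul_mulVec, hww, smul_smul]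
      rw [Statement8Aux.exp_mulVec_eigen _ h1, norm_smul]
      simp [Complex.norm_exp, Complex.mul_re, hre0]
    set u : Fin m → ℝ := fun i => (w i).re with hu
    set u' : Fin m → ℝ := fun i => (w i).im with hu'
    have hNc : ∀ t : ℝ,
        (NormedSpace.exp (t • B)).map Complex.ofReal = NormedSpace.exp ((t:ℂ) • Bc) := by
      intro t; rw [Statement8Aux.exp_map_ofReal, hsmulmap]
    have hbound : ∀ t : ℝ, ‖(NormedSpace.exp (t • B)).mulVec u‖ ≤ ‖w‖
        ∧ ‖(NormedSpace.exp (t • B)).mulVec u'‖ ≤ ‖w‖ := by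
      intro t
      set N : Matrix (Fin m) (Fin m) ℝ := NormedSpace.exp (t • B) with hN
      have hre_ : ∀ i, (N.mulVec u) i = (((N.map Complex.ofReal).mulVec w) i).re := by
        intro i
        simp only [Matrix.mulVec, dotProduct, Matrix.map_apply, Complex.re_sum]
        exact Finset.sum_congr rfl fun j _ => by simp [hu, Complex.mul_re]
      have him_ : ∀ i, (N.mulVec u') i = (((N.map Complex.ofReal).mulVec w) i).im := by
        intro i
        simp only [Matrix.mulVec, dotProduct, Matrix.map_apply, Complex.im_sum]
        exact Finset.sum_congr rfl fun j _ => by simp [hu', Complex.mul_im]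
      constructor
      · refine (pi_norm_le_iff_of_nonneg (norm_nonneg w)).mpr fun i => ?_
        rw [Real.norm_eq_abs, hre_ i, hNc t]
        calc |((NormedSpace.exp ((t:ℂ) • Bc)).mulVec w i).re|
            ≤ ‖(NormedSpace.exp ((t:ℂ) • Bc)).mulVec w i‖ :=
              Complex.abs_re_le_norm _
          _ ≤ ‖(NormedSpace.exp ((t:ℂ) • Bc)).mulVec w‖ := by
              simpa using
                norm_le_pi_norm ((NormedSpace.exp ((t:ℂ) • Bc)).mulVec w) i
          _ = ‖w‖ := horb t
      · refine (pi_norm_le_iff_of_nonneg (norm_nonneg w)).mpr fun i => ?_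
        rw [Real.norm_eq_abs, him_ i, hNc t]
        calc |((NormedSpace.exp ((t:ℂ) • Bc)).mulVec w i).im|
            ≤ ‖(NormedSpace.exp ((t:ℂ) • Bc)).mulVec w i‖ :=
              Complex.abs_im_le_norm _
          _ ≤ ‖(NormedSpace.exp ((t:ℂ) • Bc)).mulVec w‖ := by
              simpa using
                norm_le_pi_norm ((NormedSpace.exp ((t:ℂ) • Bc)).mulVec w) i
          _ = ‖w‖ := horb t
    have huu : u ≠ 0 ∨ u' ≠ 0 := by
      by_contra hcon
      push_neg at hcon
      apply hw.2
      funext i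
      have h1 := congrFun hcon.1 i
      have h2 := congrFun hcon.2 i
      simp only [hu, hu', Pi.zero_apply] at h1 h2
      exact Complex.ext (by simpa using h1) (by simpa using h2)
    rcases huu with h | h
    · refine H u h ⟨‖w‖, ?_⟩
      rintro x ⟨t, rfl⟩
      exact (hbound t).1
    · refine H u' h ⟨‖w‖, ?_⟩
      rintro x ⟨t, rfl⟩
      exact (hbound t).2
end
end
end
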